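/- arXiv:1506.09145 — 3 statements merged into one kernel-verified Lean document; each statement's English description precedes it below -/
import Mathlib

section
/- If a graph G has a weakly leveled planar drawing, then G has layered pathwidth at most 2. -/
open SimpleGraph

universe u

variable {V : Type u}

/-- A `k`-track layout of a graph `G`: a partition of the vertices into `k`
linearly ordered independent sets (tracks, with order given by `pos`),
such that the edges between each pair of tracks are non-crossing. -/
structure TrackLayout (G : SimpleGraph V) (k : ℕ) where
  track : V → Fin k
  pos : V → ℕ
  pos_inj : ∀ u v : V, track u = track v → pos u = pos v → u = v
  indep : ∀ u v : V, G.Adj u v → track u ≠ track v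
  noncross : ∀ u v u' v' : V, G.Adj u v → G.Adj u' v' →
    track u = track u' → track v = track v' →
    pos u < pos u' → ¬ (pos v' < pos v)

/-- The track-number of `G`: the minimum `k` such that `G` has a `k`-track layout. -/
noncomputable def trackNumber (G : SimpleGraph V) : ℕ :=
  sInf {k | Nonempty (TrackLayout G k)}

/-- `δ` of an arc `uv` in a 3-track layout: `+1` if it goes from track `i` to
track `i+1 (mod 3)`, and `-1` otherwise. -/
def trackDelta {G : SimpleGraph V} (T : TrackLayout G 3) (u v : V) : ℤ :=
  if T.track v = T.track u + 1 then 1 else -1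

/-- Sum of `δ` over the arcs of a walk in a 3-track layout. -/
def walkDelta {G : SimpleGraph V} (T : TrackLayout G 3) :
    ∀ {u v : V}, G.Walk u v → ℤ
  | _, _, SimpleGraph.Walk.nil => 0
  | _, _, @SimpleGraph.Walk.cons _ _ a b _ _ p => trackDelta T a b + walkDelta T p

/-- A leveled planar drawing of `G` (combinatorially): vertices assigned to
levels with every edge joining consecutive levels, and vertices linearly
ordered within each level (by `pos`) so that no two edges cross. -/
structure LeveledPlanarDrawing (G : SimpleGraph V) where
  level : V → ℤ
  pos : V → ℕ
  pos_inj : ∀ u v : V, level u = level v → pos u = pos v → u = v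
  edge_level : ∀ u v : V, G.Adj u v → |level u - level v| = 1
  noncross : ∀ u v u' v' : V, G.Adj u v → G.Adj u' v' →
    level u = level u' → level v = level v' →
    pos u < pos u' → ¬ (pos v' < pos v)

/-- A graph is leveled planar if it admits a leveled planar drawing. -/
def IsLeveledPlanar (G : SimpleGraph V) : Prop := Nonempty (LeveledPlanarDrawing G)

/-- A weakly leveled planar drawing of `G`: like a leveled planar drawing,
but edges may also join two consecutive vertices of the same level. -/
structure WeaklyLeveledPlanarDrawing (G : SimpleGraph V) where
  level : V → ℤ
  pos : V → ℕ
  pos_inj : ∀ u v : V, level u = level v → pos u = pos v → u = v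
  edge_level : ∀ u v : V, G.Adj u v → |level u - level v| ≤ 1
  noncross : ∀ u v u' v' : V, G.Adj u v → G.Adj u' v' →
    level u = level u' → level v = level v' → level u ≠ level v →
    pos u < pos u' → ¬ (pos v' < pos v)
  same_level_consecutive : ∀ u v : V, G.Adj u v → level u = level v → pos u < pos v →
    ∀ w : V, level w = level u → ¬ (pos u < pos w ∧ pos w < pos v)

/-- A path decomposition of `G`: a sequence of bags such that every vertex lies in a
nonempty contiguous subsequence of bags and every edge lies in some bag. -/
structure PathDecomp (G : SimpleGraph V) where
  bags : ℕ → Set V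
  mem_bag : ∀ v : V, ∃ i, v ∈ bags i
  contiguous : ∀ (v : V) (i j k : ℕ), i ≤ j → j ≤ k → v ∈ bags i → v ∈ bags k → v ∈ bags j
  edge_bag : ∀ u v : V, G.Adj u v → ∃ i, u ∈ bags i ∧ v ∈ bags i

/-- A layering of `G`: each edge joins vertices in the same or consecutive layers. -/
def IsLayering (G : SimpleGraph V) (lev : V → ℤ) : Prop :=
  ∀ u v : V, G.Adj u v → |lev u - lev v| ≤ 1

/-- `G` has layered pathwidth at most `k`: some path decomposition and layering
where every bag meets every layer in at most `k` vertices. -/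
def LayeredPathwidthLE (G : SimpleGraph V) (k : ℕ) : Prop :=
  ∃ (P : PathDecomp G) (lev : V → ℤ), IsLayering G lev ∧
    ∀ (i : ℕ) (l : ℤ), {v | v ∈ P.bags i ∧ lev v = l}.ncard ≤ k

noncomputable def layeredPathwidth (G : SimpleGraph V) : ℕ :=
  sInf {k | LayeredPathwidthLE G k}

/-- `G` has pathwidth at most `k`: some path decomposition with all bags of size at most `k+1`. -/
def PathwidthLE (G : SimpleGraph V) (k : ℕ) : Prop :=
  ∃ P : PathDecomp G, ∀ i, (P.bags i).ncard ≤ k + 1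

noncomputable def pathwidth (G : SimpleGraph V) : ℕ :=
  sInf {k | PathwidthLE G k}

/-- A tree decomposition of `G`. -/
structure TreeDecomp (G : SimpleGraph V) where
  ι : Type u
  T : SimpleGraph ι
  isTree : T.IsTree
  bags : ι → Set V
  edge_bag : ∀ u v : V, G.Adj u v → ∃ i, u ∈ bags i ∧ v ∈ bags i
  subtree : ∀ v : V, (T.induce {i | v ∈ bags i}).Connected

/-- `G` has layered treewidth at most `k`. -/
def LayeredTreewidthLE (G : SimpleGraph V) (k : ℕ) : Prop :=
  ∃ (D : TreeDecomp G) (lev : V → ℤ), IsLayering G lev ∧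
    ∀ (i : D.ι) (l : ℤ), {v | v ∈ D.bags i ∧ lev v = l}.ncard ≤ k

/-- `G` has tree-depth at most `d`: the vertices embed injectively into a rooted forest
(nodes = nonempty lists, ancestor = prefix) of height at most `d`, with every edge
joining an ancestor-descendant pair. -/
def TreedepthLE (G : SimpleGraph V) (d : ℕ) : Prop :=
  ∃ f : V → List ℕ, Function.Injective f ∧
    (∀ v : V, f v ≠ [] ∧ (f v).length ≤ d) ∧
    ∀ u v : V, G.Adj u v → ((f u <+: f v) ∨ (f v <+: f u))

noncomputable def treedepth (G : SimpleGraph V) : ℕ :=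
  sInf {d | TreedepthLE G d}

/-- A caterpillar: a tree having a path (the spine) containing all non-leaf vertices. -/
def IsCaterpillar (G : SimpleGraph V) : Prop :=
  G.IsTree ∧ ∃ (n : ℕ) (f : ℕ → V),
    (∀ i, i < n → G.Adj (f i) (f (i+1))) ∧
    (∀ i j, i ≤ n → j ≤ n → f i = f j → i = j) ∧
    ∀ v : V, (∃ a b : V, a ≠ b ∧ G.Adj v a ∧ G.Adj v b) → ∃ i, i ≤ n ∧ f i = v

/-- The subgraph of edges between tracks `a` and `b` of a track layout. -/
def betweenTracks (G : SimpleGraph V) {k : ℕ} (T : TrackLayout G k) (a b : Fin k) :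
    SimpleGraph V where
  Adj u v := G.Adj u v ∧
    ((T.track u = a ∧ T.track v = b) ∨ (T.track u = b ∧ T.track v = a))
  symm := by
    constructor
    intro u v h
    exact ⟨h.1.symm, by tauto⟩
  loopless := by
    constructor
    intro u h
    exact G.loopless.irrefl u h.1

/-- Outerplanarity, via one-page book embeddings: the vertices can be linearly
ordered so that no two edges cross. -/
def IsOuterplanar (G : SimpleGraph V) : Prop :=
  ∃ f : V → ℕ, Function.Injective f ∧
    ∀ u v x y : V, G.Adj u v → G.Adj x y →
      ¬ (f u < f x ∧ f x < f v ∧ f v < f y)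

/-- The complete binary tree of height `h`: vertices are binary strings of length
at most `h`, with edges from each string to its one-letter extensions. -/
def completeBinaryTree (h : ℕ) : SimpleGraph {l : List Bool // l.length ≤ h} where
  Adj u v := (∃ b, (v : List Bool) = (u : List Bool) ++ [b]) ∨
    (∃ b, (u : List Bool) = (v : List Bool) ++ [b])
  symm := by constructor; intro u v h'; tauto
  loopless := by
    constructor
    intro u h'
    rcases h' with ⟨b, hb⟩ | ⟨b, hb⟩ <;>
      · have := congrArg List.length hb
        simp at this

/-- Add an apex (universal vertex `none`) to a graph. -/
def apexGraph {α : Type u} (G : SimpleGraph α) : SimpleGraph (Option α) where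
  Adj u v :=
    (∃ a b, u = some a ∧ v = some b ∧ G.Adj a b) ∨
    (u = none ∧ ∃ b, v = some b) ∨
    (v = none ∧ ∃ a, u = some a)
  symm := by
    constructor
    rintro u v (⟨a, b, rfl, rfl, hab⟩ | ⟨rfl, b, rfl⟩ | ⟨h1, a, rfl⟩)
    · exact Or.inl ⟨b, a, rfl, rfl, hab.symm⟩
    · exact Or.inr (Or.inr ⟨rfl, b, rfl⟩)
    · subst h1; exact Or.inr (Or.inl ⟨rfl, a, rfl⟩)
  loopless := by
    constructor
    rintro u (⟨a, b, h1, h2, hab⟩ | ⟨h1, b, h2⟩ | ⟨h1, a, h2⟩)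
    · rw [h1] at h2; cases h2; exact G.loopless.irrefl a hab
    · rw [h1] at h2; cases h2
    · rw [h2] at h1; cases h1

section Stmt5Aux

variable {G : SimpleGraph V}

/-- Oriented edge representatives for a weakly leveled planar drawing:
each edge is recorded with its lower (or, if horizontal, left) endpoint first. -/
def Stmt5Erep (D : WeaklyLeveledPlanarDrawing G) : Type u :=
  {p : V × V // G.Adj p.1 p.2 ∧ (D.level p.1 < D.level p.2 ∨
    (D.level p.1 = D.level p.2 ∧ D.pos p.1 < D.pos p.2))}

instance (D : WeaklyLeveledPlanarDrawing G) [Finite V] : Finite (Stmt5Erep D) :=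
  Subtype.finite

/-- The "strictly to the left of" relation on edge representatives. -/
def Stmt5R (D : WeaklyLeveledPlanarDrawing G) (f e : Stmt5Erep D) : Prop :=
  f ≠ e ∧ ∃ x y : V, (x = f.1.1 ∨ x = f.1.2) ∧ (y = e.1.1 ∨ y = e.1.2) ∧
    D.level x = D.level y ∧ D.pos x < D.pos y

theorem stmt5_lev_succ (D : WeaklyLeveledPlanarDrawing G) (e : Stmt5Erep D)
    (h : D.level e.1.1 < D.level e.1.2) : D.level e.1.2 = D.level e.1.1 + 1 := by
  have h1 := D.edge_level e.1.1 e.1.2 e.2.1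
  have h2 := abs_le.mp (le_of_eq_of_le rfl h1)
  omega

theorem stmt5_hasMin [Finite V] (D : WeaklyLeveledPlanarDrawing G)
    (s : Set (Stmt5Erep D)) (hs : s.Nonempty) :
    ∃ m ∈ s, ∀ f ∈ s, ¬ Stmt5R D f m := by
  classical
  set P : Set V := {x | ∃ e ∈ s, x = e.1.1 ∨ x = e.1.2} with hPdef
  have hPfin : P.Finite := Set.toFinite _
  -- An edge both of whose endpoints are leftmost on their levels is minimal.
  have claimA : ∀ e ∈ s,
      (∀ x ∈ P, D.level x = D.level e.1.1 → D.pos e.1.1 ≤ D.pos x) →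
      (∀ x ∈ P, D.level x = D.level e.1.2 → D.pos e.1.2 ≤ D.pos x) →
      ∀ f ∈ s, ¬ Stmt5R D f e := by
    rintro e he h1 h2 f hf ⟨hne, x, y, hx, hy, hl, hp⟩
    have hxP : x ∈ P := ⟨f, hf, hx⟩
    rcases hy with rfl | rfl
    · exact absurd hp (not_lt.mpr (h1 x hxP hl))
    · exact absurd hp (not_lt.mpr (h2 x hxP hl))
  -- A horizontal edge whose left endpoint is leftmost and only lies on this edge is minimal.
  have claimB : ∀ e ∈ s, D.level e.1.1 = D.level e.1.2 →
      (∀ x ∈ P, D.level x = D.level e.1.1 → D.pos e.1.1 ≤ D.pos x) →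
      (∀ g ∈ s, (e.1.1 = g.1.1 ∨ e.1.1 = g.1.2) → g = e) →
      ∀ f ∈ s, ¬ Stmt5R D f e := by
    rintro e he hlev h1 huniq f hf ⟨hne, x, y, hx, hy, hl, hp⟩
    have hxP : x ∈ P := ⟨f, hf, hx⟩
    have hpe : D.pos e.1.1 < D.pos e.1.2 := by
      rcases e.2.2 with h | h
      · exact absurd hlev (ne_of_lt h)
      · exact h.2
    rcases hy with rfl | rfl
    · exact absurd hp (not_lt.mpr (h1 x hxP hl))
    · have hl' : D.level x = D.level e.1.1 := by rw [hl]; exact hlev.symm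
      rcases lt_trichotomy (D.pos x) (D.pos e.1.1) with hc | hc | hc
      · exact absurd hc (not_lt.mpr (h1 x hxP hl'))
      · have hxe : x = e.1.1 := D.pos_inj x e.1.1 hl' hc
        rw [hxe] at hx
        exact hne (huniq f hf hx)
      · exact D.same_level_consecutive e.1.1 e.1.2 e.2.1 hlev hpe x hl' ⟨hc, hp⟩
  -- Analysis of the leftmost vertex on a level, assuming no edge "ends" at it.
  have analysis : ∀ m : V, m ∈ P →
      (∀ x ∈ P, D.level x = D.level m → D.pos m ≤ D.pos x) →
      (∀ g ∈ s, g.1.2 ≠ m) →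
      (∃ m' ∈ s, ∀ f ∈ s, ¬ Stmt5R D f m') ∨
        (∃ e ∈ s, e.1.1 = m ∧ D.level e.1.2 = D.level m + 1) := by
    intro m hmP hLm hnot2
    obtain ⟨f, hfs, hfm⟩ := hmP
    have hf1 : f.1.1 = m := by
      rcases hfm with h | h
      · exact h.symm
      · exact absurd h.symm (hnot2 f hfs)
    rcases f.2.2 with hv | hh
    · right
      refine ⟨f, hfs, hf1, ?_⟩
      have := stmt5_lev_succ D f hv
      rw [hf1] at this
      exact this
    · by_cases huniq : ∀ g ∈ s, (m = g.1.1 ∨ m = g.1.2) → g = f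
      · left
        refine ⟨f, hfs, claimB f hfs hh.1 ?_ ?_⟩
        · rw [hf1]; exact hLm
        · intro g hgs hg
          rw [hf1] at hg
          exact huniq g hgs hg
      · push_neg at huniq
        obtain ⟨g, hgs, hgm, hgf⟩ := huniq
        have hg1 : g.1.1 = m := by
          rcases hgm with h | h
          · exact h.symm
          · exact absurd h.symm (hnot2 g hgs)
        rcases g.2.2 with hgv | hgh
        · right
          refine ⟨g, hgs, hg1, ?_⟩
          have := stmt5_lev_succ D g hgv
          rw [hg1] at this
          exact this
        · exfalso
          have hb : D.pos f.1.1 < D.pos f.1.2 := hh.2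
          have hc : D.pos g.1.1 < D.pos g.1.2 := hgh.2
          have hlf : D.level f.1.2 = D.level m := by rw [← hh.1, hf1]
          have hlg : D.level g.1.2 = D.level m := by rw [← hgh.1, hg1]
          have hne2 : f.1.2 ≠ g.1.2 := by
            intro hEq
            exact hgf (Subtype.ext (Prod.ext_iff.mpr ⟨by rw [hg1, hf1], hEq.symm⟩))
          have hne2p : D.pos f.1.2 ≠ D.pos g.1.2 := fun hEq =>
            hne2 (D.pos_inj _ _ (by rw [hlf, hlg]) hEq)
          rw [hf1] at hb
          rw [hg1] at hc
          rcases lt_or_gt_of_ne hne2p with hlt | hlt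
          · exact D.same_level_consecutive g.1.1 g.1.2 g.2.1 hgh.1 hgh.2 f.1.2
              (by rw [hlf, hg1]) ⟨by rw [hg1]; exact hb, hlt⟩
          · exact D.same_level_consecutive f.1.1 f.1.2 f.2.1 hh.1 hh.2 g.1.2
              (by rw [hlg, hf1]) ⟨by rw [hf1]; exact hc, hlt⟩
  -- climbing through the levels
  have climb : ∀ (n : ℕ) (m : V), m ∈ P →
      (∀ x ∈ P, D.level x = D.level m → D.pos m ≤ D.pos x) →
      (∀ g ∈ s, g.1.2 ≠ m) →
      (∀ x ∈ P, D.level x ≤ D.level m + n) →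
      ∃ m' ∈ s, ∀ f ∈ s, ¬ Stmt5R D f m' := by
    intro n
    induction n with
    | zero =>
      intro m hmP hLm hnot2 hbd
      rcases analysis m hmP hLm hnot2 with h | ⟨e, hes, he1, he2⟩
      · exact h
      · have h1 : e.1.2 ∈ P := ⟨e, hes, Or.inr rfl⟩
        have h2 := hbd _ h1
        omega
    | succ n ih =>
      intro m hmP hLm hnot2 hbd
      rcases analysis m hmP hLm hnot2 with h | ⟨e0, he0s, he01, he02⟩
      · exact h
      · set T : Set (Stmt5Erep D) :=
          {e | e ∈ s ∧ D.level e.1.1 = D.level m ∧ D.level e.1.2 = D.level m + 1} with hT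
        have he0T : e0 ∈ T := ⟨he0s, by rw [he01], he02⟩
        obtain ⟨estar, hesT, hminT⟩ :=
          Set.exists_min_image T (fun e => D.pos e.1.2) (Set.toFinite _) ⟨e0, he0T⟩
        have hkey : ∃ eh ∈ T, eh.1.1 = m ∧ ∀ e ∈ T, D.pos eh.1.2 ≤ D.pos e.1.2 := by
          have h1P : estar.1.1 ∈ P := ⟨estar, hesT.1, Or.inl rfl⟩
          have hle : D.pos m ≤ D.pos estar.1.1 := hLm _ h1P hesT.2.1
          rcases eq_or_lt_of_le hle with heq | hlt
          · have h2 : estar.1.1 = m := D.pos_inj _ _ hesT.2.1 heq.symm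
            exact ⟨estar, hesT, h2, hminT⟩
          · have hnc := D.noncross e0.1.1 e0.1.2 estar.1.1 estar.1.2 e0.2.1 estar.2.1
              (by rw [he01, hesT.2.1]) (by rw [he02, hesT.2.2])
              (by rw [he01, he02]; omega) (by rw [he01]; exact hlt)
            have hle2 : D.pos e0.1.2 ≤ D.pos estar.1.2 := not_lt.mp hnc
            exact ⟨e0, he0T, he01, fun e heT => le_trans hle2 (hminT e heT)⟩
        obtain ⟨eh, hehT, heh1, hehmin⟩ := hkey
        by_cases hLw : ∀ x ∈ P, D.level x = D.level eh.1.2 → D.pos eh.1.2 ≤ D.pos x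
        · exact ⟨eh, hehT.1, claimA eh hehT.1 (by rw [heh1]; exact hLm) hLw⟩
        · push_neg at hLw
          obtain ⟨x, hxP, hlx, hpx⟩ := hLw
          set A : Set V := {y | y ∈ P ∧ D.level y = D.level m + 1} with hA
          have hxA : x ∈ A := ⟨hxP, by rw [hlx]; exact hehT.2.2⟩
          obtain ⟨m', hm'A, hm'min⟩ := Set.exists_min_image A D.pos (Set.toFinite _) ⟨x, hxA⟩
          have hm'P : m' ∈ P := hm'A.1
          have hm'Lm : ∀ y ∈ P, D.level y = D.level m' → D.pos m' ≤ D.pos y := by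
            intro y hy hly
            exact hm'min y ⟨hy, by rw [hly]; exact hm'A.2⟩
          have hm'w : D.pos m' < D.pos eh.1.2 := lt_of_le_of_lt (hm'min x hxA) hpx
          have hnot2' : ∀ g ∈ s, g.1.2 ≠ m' := by
            intro g hgs hgm
            rcases g.2.2 with hgv | hgh
            · have hg2 : D.level g.1.2 = D.level m + 1 := by rw [hgm]; exact hm'A.2
              have hsucc := stmt5_lev_succ D g hgv
              have hg1 : D.level g.1.1 = D.level m := by omega
              have hgT : g ∈ T := ⟨hgs, hg1, hg2⟩
              have h3 := hehmin g hgT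
              rw [hgm] at h3
              omega
            · have h1A : g.1.1 ∈ A := ⟨⟨g, hgs, Or.inl rfl⟩, by rw [hgh.1, hgm]; exact hm'A.2⟩
              have h4 := hm'min _ h1A
              have h5 := hgh.2
              rw [hgm] at h5
              omega
          refine ih m' hm'P hm'Lm hnot2' ?_
          intro y hy
          have h6 := hbd y hy
          have h7 := hm'A.2
          omega
  -- entry point: the leftmost vertex on the globally lowest level
  obtain ⟨e0, he0⟩ := hs
  have hPne : P.Nonempty := ⟨e0.1.1, e0, he0, Or.inl rfl⟩
  obtain ⟨x0, hx0P, hx0min⟩ := Set.exists_min_image P D.level hPfin hPne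
  obtain ⟨y0, hy0P, hy0max⟩ := Set.exists_max_image P D.level hPfin hPne
  set A0 : Set V := {y | y ∈ P ∧ D.level y = D.level x0} with hA0
  obtain ⟨m, hmA, hmmin⟩ := Set.exists_min_image A0 D.pos (Set.toFinite _) ⟨x0, hx0P, rfl⟩
  have hmP : m ∈ P := hmA.1
  have hmLm : ∀ y ∈ P, D.level y = D.level m → D.pos m ≤ D.pos y := fun y hy hly =>
    hmmin y ⟨hy, by rw [hly]; exact hmA.2⟩
  have hnot2 : ∀ g ∈ s, g.1.2 ≠ m := by
    intro g hgs hgm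
    rcases g.2.2 with hgv | hgh
    · have hsucc := stmt5_lev_succ D g hgv
      have h1 : g.1.1 ∈ P := ⟨g, hgs, Or.inl rfl⟩
      have h2 := hx0min _ h1
      have h3 : D.level g.1.2 = D.level x0 := by rw [hgm]; exact hmA.2
      omega
    · have h1A : g.1.1 ∈ A0 := ⟨⟨g, hgs, Or.inl rfl⟩, by rw [hgh.1, hgm]; exact hmA.2⟩
      have h4 := hmmin _ h1A
      have h5 := hgh.2
      rw [hgm] at h5
      omega
  refine climb (D.level y0 - D.level m).toNat m hmP hmLm hnot2 ?_
  intro y hy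
  have h1 := hy0max y hy
  have h2 : D.level m = D.level x0 := hmA.2
  have h3 := hx0min y0 hy0P
  omega

theorem stmt5_finite [Finite V] (D : WeaklyLeveledPlanarDrawing G) :
    LayeredPathwidthLE G 2 := by
  classical
  have hWF : WellFounded (Stmt5R D) :=
    WellFounded.wellFounded_iff_has_min.mpr (stmt5_hasMin D)
  set t : Stmt5Erep D → ℕ := fun e => {f | Relation.TransGen (Stmt5R D) f e}.ncard with ht
  have hirr : ∀ e : Stmt5Erep D, ¬ Relation.TransGen (Stmt5R D) e e := fun e h =>
    (hWF.transGen.isIrrefl).irrefl e h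
  have hmono : ∀ f e : Stmt5Erep D, Stmt5R D f e → t f < t e := by
    intro f e hfe
    have hsub : {x | Relation.TransGen (Stmt5R D) x f} ⊆ {x | Relation.TransGen (Stmt5R D) x e} :=
      fun x hx => Relation.TransGen.tail hx hfe
    have hss := (Set.ssubset_iff_of_subset hsub).mpr
      ⟨f, Relation.TransGen.single hfe, hirr f⟩
    exact Set.ncard_lt_ncard hss (Set.toFinite _)
  set N : ℕ := Nat.card (Stmt5Erep D) with hN
  have htN : ∀ e : Stmt5Erep D, t e < N := by
    intro e
    have hss : {f | Relation.TransGen (Stmt5R D) f e} ⊂ Set.univ := by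
      rw [Set.ssubset_iff_of_subset (Set.subset_univ _)]
      exact ⟨e, trivial, hirr e⟩
    have h2 := Set.ncard_lt_ncard hss (Set.toFinite _)
    rwa [Set.ncard_univ] at h2
  set Inc : V → Set (Stmt5Erep D) := fun v => {e | v = e.1.1 ∨ v = e.1.2} with hInc
  set a : V → ℕ := fun v => sInf (t '' Inc v) with ha
  set b : V → ℕ := fun v => sSup (t '' Inc v) with hb
  have hat : ∀ v, ∀ e ∈ Inc v, a v ≤ t e := fun v e he => Nat.sInf_le ⟨e, he, rfl⟩
  have hbt : ∀ v, ∀ e ∈ Inc v, t e ≤ b v := fun v e he =>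
    le_csSup (Set.Finite.bddAbove (Set.toFinite _)) ⟨e, he, rfl⟩
  have hab : ∀ v, (Inc v).Nonempty → a v ≤ b v := by
    rintro v ⟨e, he⟩
    exact le_trans (hat v e he) (hbt v e he)
  have hbN : ∀ v, (Inc v).Nonempty → b v < N := by
    intro v hv
    obtain ⟨e, _, hbe⟩ := Nat.sSup_mem (hv.image t) (Set.Finite.bddAbove (Set.toFinite _))
    have h2 : b v = t e := hbe.symm
    rw [h2]
    exact htN e
  have haI : ∀ v, (Inc v).Nonempty → ∃ e ∈ Inc v, t e = a v := by
    intro v hv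
    obtain ⟨e, he, hae⟩ := Nat.sInf_mem (hv.image t)
    exact ⟨e, he, hae⟩
  have hbI : ∀ v, (Inc v).Nonempty → ∃ e ∈ Inc v, t e = b v := by
    intro v hv
    obtain ⟨e, he, hbe⟩ := Nat.sSup_mem (hv.image t) (Set.Finite.bddAbove (Set.toFinite _))
    exact ⟨e, he, hbe⟩
  obtain ⟨gV, hgV⟩ := exists_injective_nat V
  have exists_rep : ∀ u v : V, G.Adj u v →
      ∃ e : Stmt5Erep D, (e.1.1 = u ∧ e.1.2 = v) ∨ (e.1.1 = v ∧ e.1.2 = u) := by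
    intro u v huv
    rcases lt_trichotomy (D.level u) (D.level v) with h | h | h
    · exact ⟨⟨(u, v), huv, Or.inl h⟩, Or.inl ⟨rfl, rfl⟩⟩
    · have hne : u ≠ v := huv.ne
      have hpne : D.pos u ≠ D.pos v := fun hp => hne (D.pos_inj u v h hp)
      rcases lt_or_gt_of_ne hpne with hp | hp
      · exact ⟨⟨(u, v), huv, Or.inr ⟨h, hp⟩⟩, Or.inl ⟨rfl, rfl⟩⟩
      · exact ⟨⟨(v, u), huv.symm, Or.inr ⟨h.symm, hp⟩⟩, Or.inr ⟨rfl, rfl⟩⟩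
    · exact ⟨⟨(v, u), huv.symm, Or.inl h⟩, Or.inr ⟨rfl, rfl⟩⟩
  set bags : ℕ → Set V := fun n =>
    {v | (Inc v).Nonempty ∧ a v ≤ n ∧ n ≤ b v} ∪
      {v | ¬(Inc v).Nonempty ∧ n = N + gV v} with hbags
  have hmem : ∀ v : V, ∃ i, v ∈ bags i := by
    intro v
    by_cases hv : (Inc v).Nonempty
    · exact ⟨a v, Or.inl ⟨hv, le_refl _, hab v hv⟩⟩
    · exact ⟨N + gV v, Or.inr ⟨hv, rfl⟩⟩
  have hcontig : ∀ (v : V) (i j k : ℕ), i ≤ j → j ≤ k →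
      v ∈ bags i → v ∈ bags k → v ∈ bags j := by
    intro v i j k hij hjk hi hk
    by_cases hv : (Inc v).Nonempty
    · have h1 : a v ≤ i := by
        rcases hi with h | h
        · exact h.2.1
        · exact absurd hv h.1
      have h2 : k ≤ b v := by
        rcases hk with h | h
        · exact h.2.2
        · exact absurd hv h.1
      exact Or.inl ⟨hv, le_trans h1 hij, le_trans hjk h2⟩
    · have h1 : i = N + gV v := by
        rcases hi with h | h
        · exact absurd h.1 hv
        · exact h.2
      have h2 : k = N + gV v := by
        rcases hk with h | h
        · exact absurd h.1 hv
        · exact h.2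
      exact Or.inr ⟨hv, by omega⟩
  have hedge : ∀ u v : V, G.Adj u v → ∃ i, u ∈ bags i ∧ v ∈ bags i := by
    intro u v huv
    obtain ⟨e, he⟩ := exists_rep u v huv
    have hu : e ∈ Inc u := by
      rcases he with ⟨h1, _⟩ | ⟨_, h2⟩
      · exact Or.inl h1.symm
      · exact Or.inr h2.symm
    have hv : e ∈ Inc v := by
      rcases he with ⟨_, h2⟩ | ⟨h1, _⟩
      · exact Or.inr h2.symm
      · exact Or.inl h1.symm
    exact ⟨t e, Or.inl ⟨⟨e, hu⟩, hat u e hu, hbt u e hu⟩,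
      Or.inl ⟨⟨e, hv⟩, hat v e hv, hbt v e hv⟩⟩
  refine ⟨⟨bags, hmem, hcontig, hedge⟩, D.level, D.edge_level, ?_⟩
  intro n l
  by_contra hcon
  push_neg at hcon
  have pairfirst : ∀ v w : V, v ∈ bags n → w ∈ bags n → v ≠ w →
      (Inc v).Nonempty ∧ a v ≤ n ∧ n ≤ b v := by
    intro v w hv hw hvw
    rcases hv with h | h
    · exact h
    · exfalso
      rcases hw with h' | h'
      · have h6 := hbN w h'.1
        have h7 := h'.2.2
        have h8 := h.2
        omega
      · have h9 := h.2
        have h10 := h'.2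
        exact hvw (hgV (by omega : gV v = gV w))
  have tri : ∀ p q r : V, D.level p = l → D.level q = l → D.level r = l →
      (Inc p).Nonempty → a p ≤ n → n ≤ b p →
      (Inc r).Nonempty → a r ≤ n → n ≤ b r →
      D.pos p < D.pos q → D.pos q < D.pos r → False := by
    intro p q r hlp hlq hlr hpne hap hbp hrne har hbr h1 h2
    by_cases hshare : ∃ e, e ∈ Inc p ∧ e ∈ Inc r
    · obtain ⟨e, hep, her⟩ := hshare
      have hpr : p ≠ r := by
        intro hEq
        rw [hEq] at h1
        omega
      have hcase : e.1.1 = p ∧ e.1.2 = r := by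
        rcases hep with h | h <;> rcases her with h' | h'
        · exact absurd (h.trans h'.symm) hpr
        · exact ⟨h.symm, h'.symm⟩
        · exfalso
          rcases e.2.2 with hv | hh
          · rw [← h', ← h] at hv
            rw [hlr, hlp] at hv
            omega
          · have h9 := hh.2
            rw [← h', ← h] at h9
            omega
        · exact absurd (h.trans h'.symm) hpr
      have hAdj : G.Adj p r := by
        have h10 := e.2.1
        rw [hcase.1, hcase.2] at h10
        exact h10
      exact D.same_level_consecutive p r hAdj (by rw [hlp, hlr]) (by omega) q
        (by rw [hlq, hlp]) ⟨h1, h2⟩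
    · push_neg at hshare
      obtain ⟨e, hep, hbe⟩ := hbI p hpne
      obtain ⟨f, hfr, haf⟩ := haI r hrne
      have hRef : Stmt5R D e f := by
        refine ⟨?_, p, r, hep, hfr, by rw [hlp, hlr], h1.trans h2⟩
        intro hEq
        exact hshare e hep (hEq ▸ hfr)
      have h11 := hmono e f hRef
      omega
  obtain ⟨x, hx, y, hy, z, hz, hxy, hxz, hyz⟩ :=
    (Set.two_lt_ncard (Set.toFinite _)).mp hcon
  have hfx := pairfirst x y hx.1 hy.1 hxy
  have hfy := pairfirst y x hy.1 hx.1 (Ne.symm hxy)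
  have hfz := pairfirst z x hz.1 hx.1 (Ne.symm hxz)
  have hpxy : D.pos x ≠ D.pos y := fun hp => hxy (D.pos_inj _ _ (by rw [hx.2, hy.2]) hp)
  have hpxz : D.pos x ≠ D.pos z := fun hp => hxz (D.pos_inj _ _ (by rw [hx.2, hz.2]) hp)
  have hpyz : D.pos y ≠ D.pos z := fun hp => hyz (D.pos_inj _ _ (by rw [hy.2, hz.2]) hp)
  rcases lt_or_gt_of_ne hpxy with h1 | h1 <;> rcases lt_or_gt_of_ne hpxz with h2 | h2 <;>
    rcases lt_or_gt_of_ne hpyz with h3 | h3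
  · exact tri x y z hx.2 hy.2 hz.2 hfx.1 hfx.2.1 hfx.2.2 hfz.1 hfz.2.1 hfz.2.2 h1 h3
  · exact tri x z y hx.2 hz.2 hy.2 hfx.1 hfx.2.1 hfx.2.2 hfy.1 hfy.2.1 hfy.2.2 h2 h3
  · omega
  · exact tri z x y hz.2 hx.2 hy.2 hfz.1 hfz.2.1 hfz.2.2 hfy.1 hfy.2.1 hfy.2.2 h2 h1
  · exact tri y x z hy.2 hx.2 hz.2 hfy.1 hfy.2.1 hfy.2.2 hfz.1 hfz.2.1 hfz.2.2 h1 h2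
  · omega
  · exact tri y z x hy.2 hz.2 hx.2 hfy.1 hfy.2.1 hfy.2.2 hfx.1 hfx.2.1 hfx.2.2 h3 h2
  · exact tri z y x hz.2 hy.2 hx.2 hfz.1 hfz.2.1 hfz.2.2 hfx.1 hfx.2.1 hfx.2.2 h3 h1


end Stmt5Aux

/-- If `G` has a weakly leveled planar drawing, then `G` has layered pathwidth at most 2. -/
theorem stmt5 (G : SimpleGraph V) (h : Nonempty (WeaklyLeveledPlanarDrawing G)) :
    LayeredPathwidthLE G 2 := by
  obtain ⟨D⟩ := h
  rcases finite_or_infinite V with hF | hI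
  · exact stmt5_finite D
  · refine ⟨⟨fun _ => Set.univ, fun v => ⟨0, trivial⟩, fun v i j k _ _ _ _ => trivial,
      fun u v _ => ⟨0, trivial, trivial⟩⟩, fun _ => 0, fun u v _ => by simp, ?_⟩
    intro i l
    show {v : V | v ∈ (Set.univ : Set V) ∧ (0 : ℤ) = l}.ncard ≤ 2
    rcases eq_or_ne (0 : ℤ) l with hl | hl
    · have hset : {v : V | v ∈ (Set.univ : Set V) ∧ (0 : ℤ) = l} = Set.univ := by
        ext v; simp [hl]
      rw [hset, Set.ncard_univ, Nat.card_eq_zero_of_infinite]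
      omega
    · have hset : {v : V | v ∈ (Set.univ : Set V) ∧ (0 : ℤ) = l} = ∅ := by
        ext v; simp [hl]
      rw [hset, Set.ncard_empty]
      omega
end

section
/- Every n-vertex tree has pathwidth at most log₃(2n+1). -/
open SimpleGraph

universe u

variable {V : Type u}

namespace TreePW

open List Set SimpleGraph.Walk

variable {α : Type u}

/-- The graph `G` restricted to the kept vertex set `S`. -/
def GD (G : SimpleGraph α) (S : Set α) : SimpleGraph α where
  Adj a b := G.Adj a b ∧ a ∈ S ∧ b ∈ S
  symm := ⟨fun _ _ ⟨h, ha, hb⟩ => ⟨h.symm, hb, ha⟩⟩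
  loopless := ⟨fun a h => G.loopless.irrefl a h.1⟩

variable {G : SimpleGraph α} {S S' : Set α} {a b v u x : α}

lemma GD_le (G : SimpleGraph α) (S : Set α) : GD G S ≤ G := fun _ _ h => h.1

lemma GD_mono (h : S ⊆ S') : GD G S ≤ GD G S' := fun _ _ ⟨hadj, ha, hb⟩ => ⟨hadj, h ha, h hb⟩

/-- The connected component of `u` in `G` restricted to `S`. -/
def CC (G : SimpleGraph α) (S : Set α) (u : α) : Set α := {x | (GD G S).Reachable u x}

lemma mem_CC_self : u ∈ CC G S u := Reachable.refl u

lemma GD_walk_mem (p : (GD G S).Walk a b) (ha : a ∈ S) : ∀ y ∈ p.support, y ∈ S := by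
  induction p with
  | nil => intro y hy; simp at hy; subst hy; exact ha
  | cons h q ih =>
    intro y hy
    rcases List.mem_cons.mp (by simpa using hy) with rfl | hy'
    · exact ha
    · exact ih h.2.2 y hy'

lemma reach_of_mem_support {H : SimpleGraph α} : ∀ {a b : α} (p : H.Walk a b),
    ∀ y ∈ p.support, H.Reachable a y := by
  intro a b p
  induction p with
  | nil => intro y hy; simp at hy; subst hy; exact Reachable.refl _
  | cons h q ih =>
    intro y hy
    rcases List.mem_cons.mp (by simpa using hy) with rfl | hy'
    · exact Reachable.refl _
    · exact (h.reachable).trans (ih y hy')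

lemma CC_subset (hu : u ∈ S) : CC G S u ⊆ S := by
  intro x hx
  obtain ⟨p⟩ := hx
  exact GD_walk_mem p hu x p.end_mem_support

lemma CC_eq_of_mem (hx : x ∈ CC G S u) : CC G S x = CC G S u := by
  obtain ⟨p⟩ := hx
  ext y
  constructor
  · rintro ⟨q⟩
    exact Nonempty.intro (p.append q)
  · rintro ⟨q⟩
    exact Nonempty.intro (p.reverse.append q)

lemma adj_mem_CC (hu : u ∈ S) (hx : x ∈ S) (h : G.Adj u x) : x ∈ CC G S u :=
  Nonempty.intro (Walk.cons (⟨h, hu, hx⟩ : (GD G S).Adj u x) Walk.nil)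

lemma GD_walk_transfer (p : (GD G S).Walk a b) (h : ∀ y ∈ p.support, y ∈ S') :
    (GD G S').Reachable a b := by
  induction p with
  | nil => exact Reachable.refl _
  | cons hadj q ih =>
    refine Reachable.trans (Adj.reachable ⟨hadj.1, ?_, ?_⟩) (ih fun y hy => h y (by simp [hy]))
    · exact h _ (by simp)
    · exact h _ (by simp [Walk.start_mem_support])

lemma CC_mono (hss : S ⊆ S') : CC G S u ⊆ CC G S' u := fun _ hx =>
  Reachable.mono (GD_mono hss) hx

lemma CC_walk_transfer (p : (GD G S).Walk a b) (h : ∀ y ∈ p.support, y ∈ S') :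
    b ∈ CC G S' a := GD_walk_transfer p h

/-- Transfer a `GD`-walk to `G`. -/
def toG (p : (GD G S).Walk a b) : G.Walk a b :=
  p.transfer G (fun _ he => (edgeSet_mono (GD_le G S)) (p.edges_subset_edgeSet he))

lemma toG_support (p : (GD G S).Walk a b) : (toG p).support = p.support :=
  Walk.support_transfer _ _

/-- Acyclicity: no walk between adjacent vertices can avoid the connecting edge. -/
lemma no_detour (hac : G.IsAcyclic) (hadj : G.Adj v a) (p : G.Walk v a)
    (hp : s(v, a) ∉ p.edges) : False := by
  have hb := (isAcyclic_iff_forall_edge_isBridge.mp hac) (G.mem_edgeSet.mpr hadj)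
  rw [isBridge_iff] at hb
  exact hb (reachable_delete_edges_iff_exists_walk.mpr ⟨p, hp⟩)

lemma not_mem_edge_of_support (p : G.Walk a b) (hv : v ∉ p.support) {c : α} :
    s(v, c) ∉ p.edges := fun he => hv (p.fst_mem_support_of_mem_edges he)

/-- Components of `G − v` through distinct neighbors of `v` are disjoint. -/
lemma comps_disjoint (hac : G.IsAcyclic) (hav : G.Adj v a) (hbv : G.Adj v b)
    (hab : a ≠ b) : CC G {v}ᶜ a ∩ CC G {v}ᶜ b = ∅ := by
  by_contra h
  obtain ⟨x, hxa, hxb⟩ := Set.nonempty_iff_ne_empty.mpr h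
  obtain ⟨p1⟩ := hxa
  obtain ⟨p2⟩ := hxb
  have hva : v ∉ (toG p1).support := by
    rw [toG_support]
    intro hv
    exact (GD_walk_mem p1 (by simp [hav.ne']) v hv) rfl
  have hvb : v ∉ (toG p2).support := by
    rw [toG_support]
    intro hv
    exact (GD_walk_mem p2 (by simp [hbv.ne']) v hv) rfl
  refine no_detour hac hav (Walk.cons hbv ((toG p2).append (toG p1).reverse)) ?_
  simp only [Walk.edges_cons, List.mem_cons, Walk.edges_append, List.mem_append,
    Walk.edges_reverse, List.mem_reverse]
  rintro (h1 | h2 | h3)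
  · rw [Sym2.eq_iff] at h1
    rcases h1 with ⟨_, h2⟩ | ⟨h1, h2⟩
    · exact hab h2
    · exact hav.ne' h2
  · exact not_mem_edge_of_support _ hvb h2
  · exact not_mem_edge_of_support _ hva h3

/-! ### Weights and the heavy-path lemma -/

/-- Size of the component of `G - v` containing `u`. -/
noncomputable def wgt (G : SimpleGraph α) (v u : α) : ℕ := (CC G {v}ᶜ u).ncard

lemma three_big [Fintype α] (hac : G.IsAcyclic) {s : ℕ} (hn : Fintype.card α ≤ 3 * s + 3)
    (ha : G.Adj v a) (hb : G.Adj v b) (hc : G.Adj v c)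
    (hab : a ≠ b) (hac' : a ≠ c) (hbc : b ≠ c) :
    ¬ (s < wgt G v a ∧ s < wgt G v b ∧ s < wgt G v c) := by
  rintro ⟨h1, h2, h3⟩
  simp only [wgt] at h1 h2 h3
  set A := CC G {v}ᶜ a with hA
  set B := CC G {v}ᶜ b with hB
  set C := CC G {v}ᶜ c with hC
  have dAB : Disjoint A B := Set.disjoint_iff_inter_eq_empty.mpr (comps_disjoint hac ha hb hab)
  have dAC : Disjoint A C := Set.disjoint_iff_inter_eq_empty.mpr (comps_disjoint hac ha hc hac')
  have dBC : Disjoint B C := Set.disjoint_iff_inter_eq_empty.mpr (comps_disjoint hac hb hc hbc)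
  have hvA : v ∉ A := fun h => (CC_subset (by simp [ha.ne']) h) rfl
  have hvB : v ∉ B := fun h => (CC_subset (by simp [hb.ne']) h) rfl
  have hvC : v ∉ C := fun h => (CC_subset (by simp [hc.ne']) h) rfl
  have e1 : (A ∪ B ∪ C).ncard = A.ncard + B.ncard + C.ncard := by
    rw [Set.ncard_union_eq (Set.disjoint_union_left.mpr ⟨dAC, dBC⟩),
      Set.ncard_union_eq dAB]
  have e2 : (insert v (A ∪ B ∪ C)).ncard = A.ncard + B.ncard + C.ncard + 1 := by
    rw [Set.ncard_insert_of_notMem (by simp [hvA, hvB, hvC]), e1]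
  have e3 : (insert v (A ∪ B ∪ C)).ncard ≤ Fintype.card α := by
    rw [← Nat.card_eq_fintype_card, ← Set.ncard_univ]
    exact Set.ncard_le_ncard (Set.subset_univ _)
  omega

lemma step_lt [Fintype α] (hac : G.IsAcyclic) {u' : α} (huv : G.Adj v u) (huu' : G.Adj u u')
    (hu'v : u' ≠ v) : wgt G u u' < wgt G v u := by
  have hsub : CC G {u}ᶜ u' ⊆ CC G {v}ᶜ u := by
    intro x hx
    obtain ⟨p⟩ := hx
    have hvp : ∀ y ∈ p.support, y ∈ ({v}ᶜ : Set α) := by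
      intro y hy
      simp only [Set.mem_compl_iff, Set.mem_singleton_iff]
      intro hyv
      have h1 : v ∈ CC G {u}ᶜ u' := hyv ▸ (reach_of_mem_support p y hy)
      have hd := comps_disjoint hac huu' huv.symm hu'v
      have h2 : v ∈ CC G {u}ᶜ u' ∩ CC G {u}ᶜ v := ⟨h1, mem_CC_self⟩
      rw [hd] at h2
      exact h2
    have hadj : (GD G {v}ᶜ).Adj u u' := ⟨huu', by simp [huv.ne'], by simp [hu'v]⟩
    exact hadj.reachable.trans (GD_walk_transfer p hvp)
  have hssub : CC G {u}ᶜ u' ⊂ CC G {v}ᶜ u := by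
    refine ⟨hsub, fun hcon => ?_⟩
    have : u ∈ CC G {u}ᶜ u' := hcon mem_CC_self
    exact (CC_subset (by simp [huu'.ne']) this) rfl
  exact Set.ncard_lt_ncard hssub (Set.toFinite _)

lemma exists_no_big [Fintype α] [Nonempty α] (hac : G.IsAcyclic) {s : ℕ}
    (hh : ¬ ∃ a b, G.Adj a b ∧ s < wgt G a b ∧ s < wgt G b a) :
    ∃ v, ∀ u, G.Adj v u → wgt G v u ≤ s := by
  by_contra hcon
  push_neg at hcon
  have hF : ∀ v : α, ∃ u, G.Adj v u ∧ s < wgt G v u := by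
    intro v
    obtain ⟨u, hu1, hu2⟩ := hcon v
    exact ⟨u, hu1, by omega⟩
  choose F hF1 hF2 using hF
  have hFne : ∀ v : α, F (F v) ≠ v := by
    intro v heq
    refine hh ⟨v, F v, hF1 v, hF2 v, ?_⟩
    have h := hF2 (F v)
    rwa [heq] at h
  obtain ⟨v₀⟩ := ‹Nonempty α›
  set seq : ℕ → α := fun k => F^[k] v₀ with hseq
  have hstep : ∀ k, seq (k+1) = F (seq k) := fun k => Function.iterate_succ_apply' F k v₀
  set g : ℕ → ℕ := fun k => wgt G (seq k) (seq (k+1)) with hg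
  have hdec : ∀ k, g (k+1) < g k := by
    intro k
    have h1 : G.Adj (seq k) (seq (k+1)) := by rw [hstep k]; exact hF1 (seq k)
    have h2 : G.Adj (seq (k+1)) (seq (k+2)) := by rw [hstep (k+1)]; exact hF1 (seq (k+1))
    have h3 : seq (k+2) ≠ seq k := by
      rw [hstep (k+1), hstep k]
      exact hFne (seq k)
    exact step_lt hac h1 h2 h3
  have hbound : ∀ k, g k + k ≤ g 0 := by
    intro k
    induction k with
    | zero => omega
    | succ n ih => have := hdec n; omega
  have := hbound (g 0 + 1)
  omega

/-- Every element of a chain of length ≥ 2 is related to something. -/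
lemma chain'_rel_of_mem {R : α → α → Prop} :
    ∀ (l : List α), l.Chain' R → 2 ≤ l.length → ∀ v ∈ l, ∃ v', v' ∈ l ∧ (R v v' ∨ R v' v) := by
  intro l
  induction l with
  | nil => intro _ h; simp at h
  | cons a t ih =>
    intro hch hlen v hv
    match t, hch, hlen with
    | b :: t', hch, _ =>
      rcases List.mem_cons.mp hv with rfl | hv'
      · exact ⟨b, by simp, Or.inl (List.isChain_cons_cons.mp hch).1⟩
      · match t', hv' with
        | [], hv' =>
          have : v = b := by simpa using hv'
          subst this
          exact ⟨a, by simp, Or.inr (List.isChain_cons_cons.mp hch).1⟩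
        | c :: t'', hv' =>
          obtain ⟨v', hv'1, hv'2⟩ := ih (List.isChain_cons_cons.mp hch).2 (by simp) v hv'
          exact ⟨v', by simp [hv'1], hv'2⟩

/-- Every member of a nodup chain is the head, the last, or has two distinct related
neighbors in the list. -/
lemma chain'_interior {R : α → α → Prop} :
    ∀ (l : List α), l.Chain' R → l.Nodup → ∀ v ∈ l,
      (∃ t, l = v :: t) ∨ (l.getLast? = some v) ∨
        ∃ p q, p ∈ l ∧ q ∈ l ∧ p ≠ q ∧ R p v ∧ R v q
  | [] => by intro _ _ v hv; simp at hv
  | [x] => by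
      intro _ _ v hv
      simp at hv; subst hv
      exact Or.inl ⟨[], rfl⟩
  | x :: y :: ys => by
      intro hch hnd v hv
      have hch' := List.isChain_cons_cons.mp hch
      rcases List.mem_cons.mp hv with rfl | hv'
      · exact Or.inl ⟨_, rfl⟩
      · rcases chain'_interior (y :: ys) hch'.2 (List.nodup_cons.mp hnd).2 v hv' with
          ⟨t, ht⟩ | hlast | ⟨p, q, hp, hq, hpq, h1, h2⟩
        · have hvy : y = v := by
            have h := congrArg List.head? ht
            simpa using h
          subst hvy
          match ys, hch', hnd, hv' with
          | [], _, _, _ => exact Or.inr (Or.inl (by simp))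
          | z :: ys', hch2, hnd2, _ =>
            refine Or.inr (Or.inr ⟨x, z, by simp, by simp, ?_, hch2.1,
              (List.isChain_cons_cons.mp hch2.2).1⟩)
            intro hxz
            have hx : x ∉ y :: z :: ys' := (List.nodup_cons.mp hnd2).1
            simp [hxz] at hx
        · exact Or.inr (Or.inl (by rw [List.getLast?_cons_cons]; exact hlast))
        · exact Or.inr (Or.inr ⟨p, q, by simp [hp], by simp [hq], hpq, h1, h2⟩)


/-- A walk along consecutive entries of a chain list, whose edges are all
consecutive-pair edges. -/
lemma exists_walk_chain {l : List α} (hch : l.Chain' G.Adj) :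
    ∀ (d i j : ℕ) (hij : j = i + d) (hi : i < l.length) (hj : j < l.length),
      ∃ p : G.Walk (l[i]'hi) (l[j]'hj),
        ∀ e ∈ p.edges, ∃ k, i ≤ k ∧ k + 1 ≤ j ∧ ∃ (hk : k + 1 < l.length),
          e = s(l[k]'(by omega), l[k+1]'hk) := by
  intro d
  induction d with
  | zero =>
    intro i j hij hi hj
    subst hij
    exact ⟨Walk.nil, by simp⟩
  | succ d ih =>
    intro i j hij hi hj
    have hi1 : i + 1 < l.length := by omega
    have hadj : G.Adj (l[i]'hi) (l[i+1]'hi1) := by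
      have := List.isChain_iff_getElem.mp hch i (by omega)
      simpa [List.get_eq_getElem] using this
    obtain ⟨p, hp⟩ := ih (i+1) j (by omega) hi1 hj
    refine ⟨Walk.cons hadj p, ?_⟩
    intro e he
    rcases List.mem_cons.mp (by simpa using he) with rfl | he'
    · exact ⟨i, le_refl _, by omega, hi1, rfl⟩
    · obtain ⟨k, hk1, hk2, hk3, hk4⟩ := hp e he'
      exact ⟨k, by omega, hk2, hk3, hk4⟩

/-- In an acyclic graph, vertices of a nodup path-list that are not consecutive
are not adjacent. -/
lemma no_far_adj (hac : G.IsAcyclic) {l : List α} (hch : l.Chain' G.Adj) (hnd : l.Nodup)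
    {i j : ℕ} (hi : i < l.length) (hj : j < l.length) (h2 : i + 1 < j) :
    ¬ G.Adj (l[i]'hi) (l[j]'hj) := by
  intro hadj
  obtain ⟨p, hp⟩ := exists_walk_chain hch (j - i) i j (by omega) hi hj
  refine no_detour hac hadj p ?_
  intro he
  obtain ⟨k, hk1, hk2, hk3, hk4⟩ := hp _ he
  rw [Sym2.eq_iff] at hk4
  rcases hk4 with ⟨e1, e2⟩ | ⟨e1, e2⟩
  · have : i = k := (List.Nodup.getElem_inj_iff hnd).mp e1
    have : j = k + 1 := (List.Nodup.getElem_inj_iff hnd).mp e2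
    omega
  · have : i = k + 1 := (List.Nodup.getElem_inj_iff hnd).mp e1
    have : j = k := (List.Nodup.getElem_inj_iff hnd).mp e2
    omega

/-- First-exit lemma: a walk from inside `S` to outside `S` yields a boundary edge. -/
lemma first_exit {S : Set α} : ∀ {a z : α}, G.Walk a z → a ∈ S → z ∉ S →
    ∃ c q, c ∈ CC G S a ∧ q ∉ S ∧ G.Adj c q := by
  intro a z p
  induction p with
  | nil => intro ha hz; exact absurd ha hz
  | @cons a b z h q ih =>
    intro ha hz
    by_cases hb : b ∈ S
    · obtain ⟨c, q', hc, hq', hadj⟩ := ih hb hz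
      refine ⟨c, q', ?_, hq', hadj⟩
      rwa [CC_eq_of_mem (adj_mem_CC ha hb h)] at hc
    · exact ⟨a, b, mem_CC_self, hb, h⟩

/-- Every vertex outside a nonempty list is in a component attached to the list. -/
lemma att_exists (hconn : G.Connected) {l : List α} (hl : l ≠ []) (hu : u ∉ l) :
    ∃ i, ∃ (hi : i < l.length), ∃ c, c ∈ CC G {x | x ∉ l} u ∧ G.Adj (l[i]'hi) c := by
  obtain ⟨p⟩ := hconn.preconnected u (l.head hl)
  have hhead : l.head hl ∈ l := List.head_mem hl
  obtain ⟨c, q, hc, hq, hadj⟩ := first_exit (S := {x | x ∉ l}) p (by simpa using hu)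
    (by simp [hhead])
  simp only [Set.mem_setOf_eq, not_not] at hq
  obtain ⟨i, hi, hiq⟩ := List.mem_iff_getElem.mp hq
  exact ⟨i, hi, c, hc, by rw [hiq]; exact hadj.symm⟩

/-- All attachments of a component to the path-list go to the same path vertex. -/
lemma att_unique (hac : G.IsAcyclic) {l : List α} (hch : l.Chain' G.Adj) (hnd : l.Nodup)
    {u c c' : α} (hul : u ∉ l) (hc : c ∈ CC G {x | x ∉ l} u) (hc' : c' ∈ CC G {x | x ∉ l} u)
    {i j : ℕ} (hi : i < l.length) (hj : j < l.length)
    (hadjc : G.Adj (l[i]'hi) c) (hadjc' : G.Adj (l[j]'hj) c') : i = j := by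
  by_contra hij
  have hcl : c ∉ l := by
    have := CC_subset (S := {x | x ∉ l}) (by simpa using hul) hc
    simpa using this
  have hc'l : c' ∉ l := by
    have := CC_subset (S := {x | x ∉ l}) (by simpa using hul) hc'
    simpa using this
  -- walk from c' to c inside the component
  obtain ⟨p1⟩ := hc
  obtain ⟨p2⟩ := hc'
  have hw : (GD G {x | x ∉ l}).Walk c' c := p2.reverse.append p1
  have hwsup : ∀ y ∈ hw.support, y ∉ l := by
    intro y hy
    have := GD_walk_mem hw (by simpa using hc'l) y hy
    simpa using this
  -- walk along the list from position i to position j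
  obtain ⟨pl, hpl⟩ : ∃ p : G.Walk (l[i]'hi) (l[j]'hj),
      ∀ e ∈ p.edges, ∃ k, ∃ (hk : k + 1 < l.length), e = s(l[k]'(by omega), l[k+1]'hk) := by
    rcases lt_or_gt_of_ne hij with h | h
    · obtain ⟨p, hp⟩ := exists_walk_chain hch (j - i) i j (by omega) hi hj
      exact ⟨p, fun e he => by obtain ⟨k, _, _, hk3, hk4⟩ := hp e he; exact ⟨k, hk3, hk4⟩⟩
    · obtain ⟨p, hp⟩ := exists_walk_chain hch (i - j) j i (by omega) hj hi
      refine ⟨p.reverse, fun e he => ?_⟩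
      rw [Walk.edges_reverse, List.mem_reverse] at he
      obtain ⟨k, _, _, hk3, hk4⟩ := hp e he
      exact ⟨k, hk3, hk4⟩
  -- the full detour walk from l[i] to c avoiding the edge s(l[i], c)
  refine no_detour hac hadjc (pl.append (Walk.cons hadjc' (toG hw))) ?_
  rw [Walk.edges_append]
  intro hmem
  rcases List.mem_append.mp hmem with hin | hin
  · obtain ⟨k, hk, heq⟩ := hpl _ hin
    rw [Sym2.eq_iff] at heq
    rcases heq with ⟨e1, e2⟩ | ⟨e1, e2⟩
    · exact hcl (e2 ▸ List.getElem_mem _)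
    · exact hcl (e2 ▸ List.getElem_mem _)
  · rw [Walk.edges_cons] at hin
    rcases List.mem_cons.mp hin with heq | hin'
    · rw [Sym2.eq_iff] at heq
      rcases heq with ⟨e1, e2⟩ | ⟨e1, e2⟩
      · exact hij ((List.Nodup.getElem_inj_iff hnd).mp e1)
      · exact hc'l (e1 ▸ List.getElem_mem _)
    · have : l[i]'hi ∈ (toG hw).support := Walk.fst_mem_support_of_mem_edges _ hin'
      rw [toG_support] at this
      exact hwsup _ this (List.getElem_mem _)


/-- The key structural lemma: a tree on at most `3s+3` vertices has a path whose
removal leaves components of size at most `s`. -/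
lemma heavy_path [Fintype α] (hG : G.IsTree) {s : ℕ} (hn : Fintype.card α ≤ 3 * s + 3) :
    ∃ l : List α, l ≠ [] ∧ l.Chain' G.Adj ∧ l.Nodup ∧
      ∀ u, u ∉ l → (CC G {x | x ∉ l} u).ncard ≤ s := by
  classical
  have hac := hG.IsAcyclic
  have hconn := hG.isConnected
  have hne : Nonempty α := hconn.nonempty
  -- reduction: a list where all components adjacent to the list are small works
  have reduce : ∀ l : List α, l ≠ [] → l.Chain' G.Adj →
      (∀ (i : ℕ) (hi : i < l.length) (c : α), c ∉ l → G.Adj (l[i]'hi) c →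
        wgt G (l[i]'hi) c ≤ s) →
      ∀ u, u ∉ l → (CC G {x | x ∉ l} u).ncard ≤ s := by
    intro l hl hch hsmall u hu
    obtain ⟨i, hi, c, hc, hadj⟩ := att_exists hconn hl hu
    have hcl : c ∉ l := by
      have := CC_subset (S := {x | x ∉ l}) (by simpa using hu) hc
      simpa using this
    have h1 : CC G {x | x ∉ l} u = CC G {x | x ∉ l} c := (CC_eq_of_mem hc).symm
    have h2 : CC G {x | x ∉ l} c ⊆ CC G {(l[i]'hi)}ᶜ c := by
      refine CC_mono ?_
      intro x hx
      simp only [Set.mem_setOf_eq] at hx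
      simp only [Set.mem_compl_iff, Set.mem_singleton_iff]
      intro hxl
      exact hx (hxl ▸ List.getElem_mem _)
    calc (CC G {x | x ∉ l} u).ncard = (CC G {x | x ∉ l} c).ncard := by rw [h1]
      _ ≤ (CC G {(l[i]'hi)}ᶜ c).ncard := Set.ncard_le_ncard h2 (Set.toFinite _)
      _ ≤ s := hsmall i hi c hcl hadj
  by_cases hh : ∃ a b, G.Adj a b ∧ s < wgt G a b ∧ s < wgt G b a
  · -- there is a heavy edge: take a maximum-length heavy path
    obtain ⟨a, b, hab, hwab, hwba⟩ := hh
    set R : α → α → Prop := fun p q => G.Adj p q ∧ s < wgt G p q ∧ s < wgt G q p with hR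
    set K : ℕ → Prop := fun k => ∃ l : List α, (l.Chain' R ∧ l.Nodup) ∧ l.length = k with hK
    have hK2 : K 2 := ⟨[a, b], ⟨by simp [List.Chain', hR, hab, hwab, hwba], by simp [hab.ne]⟩, rfl⟩
    have hcard2 : 2 ≤ Fintype.card α := by
      have : ([a, b] : List α).Nodup := by simp [hab.ne]
      simpa using this.length_le_card
    set N := Nat.findGreatest K (Fintype.card α) with hN
    have hKN : K N := Nat.findGreatest_spec hcard2 hK2
    have hmax : ∀ l' : List α, l'.Chain' R → l'.Nodup → l'.length ≤ N := by
      intro l' h1 h2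
      by_contra hlen
      push_neg at hlen
      exact Nat.findGreatest_is_greatest hlen h2.length_le_card ⟨l', ⟨h1, h2⟩, rfl⟩
    obtain ⟨l, ⟨hch, hnd⟩, hlen⟩ := hKN
    have hlen2 : 2 ≤ l.length := by
      rw [hlen]
      rcases Nat.lt_or_ge N 2 with h | h
      · exact absurd (hmax [a,b] (by simp [List.Chain', hR, hab, hwab, hwba]) (by simp [hab.ne])) (by simpa using h)
      · exact h
    have hchadj : l.Chain' G.Adj := hch.imp (fun a b h => h.1)
    have hlne : l ≠ [] := by
      intro h; rw [h] at hlen2; simp at hlen2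
    -- the key smallness claim
    have hsmall : ∀ (i : ℕ) (hi : i < l.length) (c : α), c ∉ l → G.Adj (l[i]'hi) c →
        wgt G (l[i]'hi) c ≤ s := by
      intro i hi c hcl hadjc
      by_contra hbig
      push_neg at hbig
      set q := l[i]'hi with hq
      have hql : q ∈ l := List.getElem_mem _
      -- Step 1: q has a heavy neighbor q' in l
      obtain ⟨q', hq'l, hq'rel⟩ := chain'_rel_of_mem l hch hlen2 q hql
      have hRqq' : R q q' := by
        rcases hq'rel with h | h
        · exact h
        · exact ⟨h.1.symm, h.2.2, h.2.1⟩
      have hcq' : c ≠ q' := fun h => hcl (h ▸ hq'l)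
      -- Step 2: the back-component of the edge q-c is also big
      have hback : s < wgt G c q := by
        have hsub : insert q (CC G {q}ᶜ q') ⊆ CC G {c}ᶜ q := by
          intro x hx
          rcases Set.mem_insert_iff.mp hx with rfl | hx'
          · exact mem_CC_self
          · obtain ⟨p⟩ := hx'
            have hcsup : ∀ y ∈ p.support, y ∈ ({c}ᶜ : Set α) := by
              intro y hy
              simp only [Set.mem_compl_iff, Set.mem_singleton_iff]
              intro hyc
              have h1 : c ∈ CC G {q}ᶜ q' := hyc ▸ (reach_of_mem_support p y hy)
              have hdisj := comps_disjoint hac hRqq'.1 hadjc hcq'.symm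
              have hmem : c ∈ CC G {q}ᶜ q' ∩ CC G {q}ᶜ c := ⟨h1, mem_CC_self⟩
              rw [hdisj] at hmem
              exact hmem
            have hadj : (GD G {c}ᶜ).Adj q q' := ⟨hRqq'.1, by simp [hadjc.ne],
              by simp [Ne.symm hcq']⟩
            exact hadj.reachable.trans (GD_walk_transfer p hcsup)
        have hqnot : q ∉ CC G {q}ᶜ q' :=
          fun h => (CC_subset (by simp [hRqq'.1.ne']) h) rfl
        have hins : (insert q (CC G {q}ᶜ q')).ncard = (CC G {q}ᶜ q').ncard + 1 :=
          Set.ncard_insert_of_notMem hqnot (Set.toFinite _)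
        have hle : (insert q (CC G {q}ᶜ q')).ncard ≤ (CC G {c}ᶜ q).ncard :=
          Set.ncard_le_ncard hsub (Set.toFinite _)
        have : s < wgt G q q' := hRqq'.2.1
        simp only [wgt] at *
        omega
      have hRqc : R q c := ⟨hadjc, hbig, hback⟩
      -- Step 3: by maximality and the degree bound, this is impossible
      rcases chain'_interior l hch hnd q hql with ⟨t, ht⟩ | hlast | ⟨p', q'', hp', hq'', hpq'', h1, h2⟩
      · -- q is the head: extend
        have hgood : (c :: l).Chain' R := by
          rw [ht]; simp only [List.Chain']; rw [List.isChain_cons_cons]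
          exact ⟨⟨hRqc.1.symm, hback, hbig⟩, ht ▸ hch⟩
        have hnd' : (c :: l).Nodup := List.nodup_cons.mpr ⟨hcl, hnd⟩
        have := hmax (c :: l) hgood hnd'
        simp [hlen] at this
      · -- q is the last: extend at the end
        have hgood : (l ++ [c]).Chain' R := by
          simp only [List.Chain']; rw [List.isChain_append]
          refine ⟨hch, by simp, ?_⟩
          intro x hx y hy
          rw [hlast] at hx
          simp at hx hy
          rw [← hx, ← hy]
          exact hRqc
        have hnd' : (l ++ [c]).Nodup := by
          rw [List.nodup_append]
          exact ⟨hnd, by simp, by simp [List.disjoint_singleton, hcl]; exact fun a ha h => hcl (h ▸ ha)⟩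
        have := hmax (l ++ [c]) hgood hnd'
        simp [hlen] at this
      · -- q is interior: three big components
        have h3 : p' ≠ q'' ∧ p' ≠ c ∧ q'' ≠ c :=
          ⟨hpq'', fun h => hcl (h ▸ hp'), fun h => hcl (h ▸ hq'')⟩
        exact three_big hac hn h1.1.symm h2.1 hadjc h3.1 h3.2.1 h3.2.2
          ⟨h1.2.2, h2.2.1, hbig⟩
    exact ⟨l, hlne, hchadj, hnd, reduce l hlne hchadj hsmall⟩
  · -- no heavy edge: a single vertex works
    obtain ⟨v, hv⟩ := exists_no_big hac hh
    refine ⟨[v], by simp, by simp [List.Chain'], by simp, ?_⟩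
    refine reduce [v] (by simp) (by simp [List.Chain']) ?_
    intro i hi c hcl hadjc
    have hi0 : i = 0 := by simpa using hi
    subst hi0
    exact hv c (by simpa using hadjc)
  done


/-! ### Path decompositions as lists of bags -/

/-- The `i`-th bag of a list of bags (empty beyond the end). -/
def bagAt (L : List (Set α)) (i : ℕ) : Set α := L.getD i ∅

lemma bagAt_nil (i : ℕ) : bagAt ([] : List (Set α)) i = ∅ := by simp [bagAt]

lemma bagAt_of_le {L : List (Set α)} {i : ℕ} (h : L.length ≤ i) : bagAt L i = ∅ :=
  List.getD_eq_default _ _ h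

lemma lt_length_of_mem_bagAt {L : List (Set α)} {i : ℕ} (h : v ∈ bagAt L i) : i < L.length := by
  by_contra hc
  rw [bagAt_of_le (by omega)] at h
  exact h

lemma bagAt_append_left {L1 L2 : List (Set α)} {i : ℕ} (h : i < L1.length) :
    bagAt (L1 ++ L2) i = bagAt L1 i := List.getD_append _ _ _ _ h

lemma bagAt_append_right {L1 L2 : List (Set α)} {i : ℕ} (h : L1.length ≤ i) :
    bagAt (L1 ++ L2) i = bagAt L2 (i - L1.length) := List.getD_append_right _ _ _ _ h

lemma bagAt_cons_zero {B : Set α} {L : List (Set α)} : bagAt (B :: L) 0 = B := rfl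

lemma bagAt_cons_succ {B : Set α} {L : List (Set α)} {i : ℕ} :
    bagAt (B :: L) (i+1) = bagAt L i := rfl

lemma bagAt_map_insert {L : List (Set α)} {i : ℕ} (h : i < L.length) :
    bagAt (L.map (insert v)) i = insert v (bagAt L i) := by
  rw [bagAt, bagAt, List.getD_eq_getElem _ _ (by simpa using h), List.getD_eq_getElem _ _ h]
  simp

lemma bagAt_map_image {β : Type u} {L : List (Set β)} {f : β → α} {i : ℕ} :
    bagAt (L.map (fun B => f '' B)) i = f '' (bagAt L i) := by
  rcases Nat.lt_or_ge i L.length with h | h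
  · rw [bagAt, bagAt, List.getD_eq_getElem _ _ (by simpa using h), List.getD_eq_getElem _ _ h]
    simp
  · rw [bagAt_of_le (by simpa using h), bagAt_of_le h]
    simp

/-- `L` is a path decomposition of the set `A` in `G`. -/
structure IsPD (G : SimpleGraph α) (A : Set α) (L : List (Set α)) : Prop where
  sub : ∀ i, bagAt L i ⊆ A
  cover : ∀ v ∈ A, ∃ i, v ∈ bagAt L i
  contig : ∀ (v : α) (i j k : ℕ), i ≤ j → j ≤ k →
    v ∈ bagAt L i → v ∈ bagAt L k → v ∈ bagAt L j
  edge : ∀ u v, G.Adj u v → u ∈ A → v ∈ A → ∃ i, u ∈ bagAt L i ∧ v ∈ bagAt L i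

/-- All bags have size at most `k`. -/
def Bnd (L : List (Set α)) (k : ℕ) : Prop := ∀ i, (bagAt L i).ncard ≤ k

lemma Bnd.append {L1 L2 : List (Set α)} {k : ℕ} (h1 : Bnd L1 k) (h2 : Bnd L2 k) :
    Bnd (L1 ++ L2) k := by
  intro i
  rcases Nat.lt_or_ge i L1.length with h | h
  · rw [bagAt_append_left h]; exact h1 i
  · rw [bagAt_append_right h]; exact h2 _

lemma IsPD.empty (G : SimpleGraph α) : IsPD G ∅ [] where
  sub := fun i => by simp [bagAt_nil]
  cover := fun v hv => absurd hv (Set.notMem_empty v)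
  contig := fun v i j k _ _ h _ => absurd h (by simp [bagAt_nil])
  edge := fun u v _ h _ => absurd h (Set.notMem_empty u)

/-- Concatenation of decompositions of disjoint parts with no cross edges. -/
lemma IsPD.concat {A B : Set α} {L1 L2 : List (Set α)} (h1 : IsPD G A L1)
    (h2 : IsPD G B L2) (hdisj : Disjoint A B)
    (hnoedge : ∀ u v, G.Adj u v → u ∈ A → v ∈ B → False) :
    IsPD G (A ∪ B) (L1 ++ L2) where
  sub := by
    intro i x hx
    rcases Nat.lt_or_ge i L1.length with h | h
    · rw [bagAt_append_left h] at hx; exact Or.inl (h1.sub i hx)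
    · rw [bagAt_append_right h] at hx; exact Or.inr (h2.sub _ hx)
  cover := by
    intro v hv
    rcases hv with hv | hv
    · obtain ⟨i, hi⟩ := h1.cover v hv
      exact ⟨i, by rwa [bagAt_append_left (lt_length_of_mem_bagAt hi)]⟩
    · obtain ⟨i, hi⟩ := h2.cover v hv
      refine ⟨L1.length + i, ?_⟩
      rwa [bagAt_append_right (by omega), Nat.add_sub_cancel_left]
  contig := by
    intro v i j k hij hjk hvi hvk
    rcases Nat.lt_or_ge i L1.length with h | h
    · rw [bagAt_append_left h] at hvi
      have hvA : v ∈ A := h1.sub i hvi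
      have hk : k < L1.length := by
        by_contra hc
        rw [bagAt_append_right (by omega)] at hvk
        exact absurd (h2.sub _ hvk) (Set.disjoint_left.mp hdisj hvA)
      rw [bagAt_append_left (by omega)] at hvk ⊢
      exact h1.contig v i j k hij hjk hvi hvk
    · rw [bagAt_append_right h] at hvi
      rw [bagAt_append_right (by omega)] at hvk ⊢
      exact h2.contig v (i - L1.length) (j - L1.length) (k - L1.length)
        (by omega) (by omega) hvi hvk
  edge := by
    intro u v hadj hu hv
    rcases hu with hu | hu
    · rcases hv with hv | hv
      · obtain ⟨i, hi1, hi2⟩ := h1.edge u v hadj hu hv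
        have hlt := lt_length_of_mem_bagAt hi1
        exact ⟨i, by rwa [bagAt_append_left hlt], by rwa [bagAt_append_left hlt]⟩
      · exact absurd (hnoedge u v hadj hu hv) not_false
    · rcases hv with hv | hv
      · exact absurd (hnoedge v u hadj.symm hv hu) not_false
      · obtain ⟨i, hi1, hi2⟩ := h2.edge u v hadj hu hv
        refine ⟨L1.length + i, ?_, ?_⟩ <;>
          rw [bagAt_append_right (by omega), Nat.add_sub_cancel_left] <;> assumption

/-- Bags of the add-vertex construction. -/
lemma addVert_bag_succ {L : List (Set α)} {q : α} {i : ℕ} :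
    bagAt ({q} :: L.map (insert q)) (i+1) =
      if i < L.length then insert q (bagAt L i) else ∅ := by
  rw [bagAt_cons_succ]
  split
  · exact bagAt_map_insert ‹_›
  · exact bagAt_of_le (by simp; omega)

/-- Add a vertex to every bag (with a fresh `{q}` bag in front). -/
lemma IsPD.addVert {A : Set α} {L : List (Set α)} (h : IsPD G A L) {q : α} (hq : q ∉ A) :
    IsPD G (insert q A) ({q} :: L.map (insert q)) := by
  constructor
  · -- sub
    intro i
    match i with
    | 0 => intro x hx; rw [bagAt_cons_zero] at hx; simp at hx; simp [hx]
    | i+1 =>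
      rw [addVert_bag_succ]
      split
      · exact Set.insert_subset_insert (h.sub i)
      · simp
  · -- cover
    intro v hv
    rcases Set.mem_insert_iff.mp hv with rfl | hv'
    · exact ⟨0, by rw [bagAt_cons_zero]; simp⟩
    · obtain ⟨i, hi⟩ := h.cover v hv'
      refine ⟨i+1, ?_⟩
      rw [addVert_bag_succ, if_pos (lt_length_of_mem_bagAt hi)]
      exact Set.mem_insert_of_mem _ hi
  · -- contig
    intro v i j k hij hjk hvi hvk
    by_cases hvq : v = q
    · subst hvq
      match j with
      | 0 => rw [bagAt_cons_zero]; simp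
      | j+1 =>
        match k, hjk with
        | 0, hjk => exact absurd hjk (by omega)
        | k+1, hjk =>
          have hk : k < L.length := by
            by_contra hc
            rw [addVert_bag_succ, if_neg hc] at hvk
            exact hvk
          rw [addVert_bag_succ, if_pos (by omega)]
          simp
    · have hi0 : i ≠ 0 := by
        intro h0
        subst h0
        rw [bagAt_cons_zero] at hvi
        simp at hvi
        exact hvq hvi
      obtain ⟨i, rfl⟩ : ∃ i', i = i' + 1 := ⟨i - 1, by omega⟩
      obtain ⟨j, rfl⟩ : ∃ j', j = j' + 1 := ⟨j - 1, by omega⟩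
      obtain ⟨k, rfl⟩ : ∃ k', k = k' + 1 := ⟨k - 1, by omega⟩
      rw [addVert_bag_succ] at hvi hvk ⊢
      have hiL : i < L.length := by
        by_contra hc; rw [if_neg hc] at hvi; exact hvi
      have hkL : k < L.length := by
        by_contra hc; rw [if_neg hc] at hvk; exact hvk
      rw [if_pos hiL] at hvi
      rw [if_pos hkL] at hvk
      have hvj : v ∈ bagAt L j := h.contig v i j k (by omega) (by omega)
        (by rcases Set.mem_insert_iff.mp hvi with h' | h'; exact absurd h' hvq; exact h')
        (by rcases Set.mem_insert_iff.mp hvk with h' | h'; exact absurd h' hvq; exact h')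
      rw [if_pos (lt_length_of_mem_bagAt hvj)]
      exact Set.mem_insert_of_mem _ hvj
  · -- edge
    intro x y hadj hx hy
    rcases Set.mem_insert_iff.mp hx with rfl | hx'
    · rcases Set.mem_insert_iff.mp hy with rfl | hy'
      · exact absurd rfl hadj.ne
      · obtain ⟨i, hi⟩ := h.cover y hy'
        refine ⟨i+1, ?_, ?_⟩ <;> rw [addVert_bag_succ, if_pos (lt_length_of_mem_bagAt hi)]
        · exact Set.mem_insert _ _
        · exact Set.mem_insert_of_mem _ hi
    · rcases Set.mem_insert_iff.mp hy with rfl | hy'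
      · obtain ⟨i, hi⟩ := h.cover x hx'
        refine ⟨i+1, ?_, ?_⟩ <;> rw [addVert_bag_succ, if_pos (lt_length_of_mem_bagAt hi)]
        · exact Set.mem_insert_of_mem _ hi
        · exact Set.mem_insert _ _
      · obtain ⟨i, hi1, hi2⟩ := h.edge x y hadj hx' hy'
        refine ⟨i+1, ?_, ?_⟩ <;> rw [addVert_bag_succ, if_pos (lt_length_of_mem_bagAt hi1)]
        · exact Set.mem_insert_of_mem _ hi1
        · exact Set.mem_insert_of_mem _ hi2

lemma Bnd.addVert {L : List (Set α)} {k : ℕ} (h : Bnd L k) (q : α) :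
    Bnd ({q} :: L.map (insert q)) (k+1) := by
  intro i
  match i with
  | 0 => rw [bagAt_cons_zero]; simp
  | i+1 =>
    rw [addVert_bag_succ]
    split
    · exact le_trans (Set.ncard_insert_le _ _) (by have := h i; omega)
    · simp


/-- Gluing a decomposition whose distinguished vertex `q` lies in every bag
with a later decomposition, where the only edges between the parts go from `q`
to the first bag of the second part. -/
lemma IsPD.concat3 {A B B0 : Set α} {L1 T : List (Set α)} {q : α}
    (h1 : IsPD G A L1) (h2 : IsPD G B (B0 :: T)) (hdisj : Disjoint A B)
    (hqA : q ∈ A) (hqall : ∀ i, i < L1.length → q ∈ bagAt L1 i)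
    (hedge : ∀ u v, G.Adj u v → u ∈ A → v ∈ B → u = q ∧ v ∈ B0) :
    IsPD G (A ∪ B) (L1 ++ (insert q B0) :: T) := by
  have hqB : q ∉ B := Set.disjoint_left.mp hdisj hqA
  have hB0 : B0 ⊆ B := by
    have := h2.sub 0
    rwa [bagAt_cons_zero] at this
  have hTsub : ∀ j, bagAt ((insert q B0) :: T) (j+1) ⊆ B := by
    intro j
    rw [bagAt_cons_succ]
    have := h2.sub (j+1)
    rwa [bagAt_cons_succ] at this
  have hmemB : ∀ v ∈ B, ∀ j, (v ∈ bagAt ((insert q B0) :: T) j ↔ v ∈ bagAt (B0 :: T) j) := by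
    intro v hv j
    match j with
    | 0 =>
      rw [bagAt_cons_zero, bagAt_cons_zero]
      simp only [Set.mem_insert_iff]
      constructor
      · rintro (rfl | h)
        · exact absurd hv hqB
        · exact h
      · exact Or.inr
    | j+1 => rw [bagAt_cons_succ, bagAt_cons_succ]
  have hA' : ∀ x, x ∈ A → x ≠ q → ∀ j, x ∉ bagAt ((insert q B0) :: T) j := by
    intro x hx hxq j hmem
    match j with
    | 0 =>
      rw [bagAt_cons_zero] at hmem
      rcases Set.mem_insert_iff.mp hmem with rfl | hmem'
      · exact hxq rfl
      · exact Set.disjoint_left.mp hdisj hx (hB0 hmem')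
    | j+1 => exact Set.disjoint_left.mp hdisj hx (hTsub j hmem)
  have hBnotL1 : ∀ x ∈ B, ∀ i, x ∉ bagAt L1 i := by
    intro x hx i hmem
    exact Set.disjoint_left.mp hdisj (h1.sub i hmem) hx
  have hqbag : ∀ j, (q ∈ bagAt (L1 ++ (insert q B0) :: T) j ↔ j ≤ L1.length) := by
    intro j
    rcases Nat.lt_or_ge j L1.length with h | h
    · rw [bagAt_append_left h]
      exact ⟨fun _ => by omega, fun _ => hqall j h⟩
    · rw [bagAt_append_right h]
      rcases Nat.eq_or_lt_of_le h with heq | hlt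
      · rw [← heq, Nat.sub_self, bagAt_cons_zero]
        exact ⟨fun _ => by omega, fun _ => Set.mem_insert _ _⟩
      · obtain ⟨j', hj'⟩ : ∃ j', j - L1.length = j' + 1 := ⟨j - L1.length - 1, by omega⟩
        rw [hj']
        constructor
        · intro hmem
          exact absurd (hTsub j' hmem) hqB
        · intro hle
          omega
  constructor
  · -- sub
    intro i x hx
    rcases Nat.lt_or_ge i L1.length with h | h
    · rw [bagAt_append_left h] at hx
      exact Or.inl (h1.sub i hx)
    · rw [bagAt_append_right h] at hx
      match hi : i - L1.length, hx with
      | 0, hx =>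
        rw [bagAt_cons_zero] at hx
        rcases Set.mem_insert_iff.mp hx with rfl | hx'
        · exact Or.inl hqA
        · exact Or.inr (hB0 hx')
      | j+1, hx => exact Or.inr (hTsub j hx)
  · -- cover
    intro v hv
    rcases hv with hv | hv
    · obtain ⟨i, hi⟩ := h1.cover v hv
      exact ⟨i, by rwa [bagAt_append_left (lt_length_of_mem_bagAt hi)]⟩
    · obtain ⟨j, hj⟩ := h2.cover v hv
      refine ⟨L1.length + j, ?_⟩
      rw [bagAt_append_right (by omega), Nat.add_sub_cancel_left]
      exact (hmemB v hv _).mpr hj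
  · -- contig
    intro v i j k hij hjk hvi hvk
    by_cases hvq : v = q
    · subst hvq
      rw [hqbag] at hvk ⊢
      omega
    · by_cases hvA : v ∈ A
      · have hk : k < L1.length := by
          by_contra hc
          rw [bagAt_append_right (by omega)] at hvk
          exact hA' v hvA hvq _ hvk
        rw [bagAt_append_left (by omega)] at hvi hvk ⊢
        exact h1.contig v i j k hij hjk hvi hvk
      · have hvB : v ∈ B := by
          rcases Nat.lt_or_ge i L1.length with h | h
          · rw [bagAt_append_left h] at hvi
            exact absurd (h1.sub i hvi) hvA
          · rw [bagAt_append_right h] at hvi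
            match hii : i - L1.length, hvi with
            | 0, hvi =>
              rw [bagAt_cons_zero] at hvi
              rcases Set.mem_insert_iff.mp hvi with rfl | hvi'
              · exact absurd rfl hvq
              · exact hB0 hvi'
            | jj+1, hvi => exact hTsub jj hvi
        have hi : L1.length ≤ i := by
          by_contra hc
          rw [bagAt_append_left (by omega)] at hvi
          exact hBnotL1 v hvB i hvi
        rw [bagAt_append_right hi] at hvi
        rw [bagAt_append_right (by omega)] at hvk ⊢
        rw [hmemB v hvB] at hvi hvk ⊢
        exact h2.contig v (i - L1.length) (j - L1.length) (k - L1.length)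
          (by omega) (by omega) hvi hvk
  · -- edge
    intro x y hadj hx hy
    rcases hx with hx | hx
    · rcases hy with hy | hy
      · obtain ⟨i, hi1, hi2⟩ := h1.edge x y hadj hx hy
        have hlt := lt_length_of_mem_bagAt hi1
        exact ⟨i, by rwa [bagAt_append_left hlt], by rwa [bagAt_append_left hlt]⟩
      · obtain ⟨rfl, hy0⟩ := hedge x y hadj hx hy
        refine ⟨L1.length, ?_, ?_⟩ <;>
          rw [bagAt_append_right (by omega), Nat.sub_self, bagAt_cons_zero]
        · exact Set.mem_insert _ _
        · exact Set.mem_insert_of_mem _ hy0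
    · rcases hy with hy | hy
      · obtain ⟨rfl, hx0⟩ := hedge y x hadj.symm hy hx
        refine ⟨L1.length, ?_, ?_⟩ <;>
          rw [bagAt_append_right (by omega), Nat.sub_self, bagAt_cons_zero]
        · exact Set.mem_insert_of_mem _ hx0
        · exact Set.mem_insert _ _
      · obtain ⟨j, hj1, hj2⟩ := h2.edge x y hadj hx hy
        refine ⟨L1.length + j, ?_, ?_⟩ <;>
          rw [bagAt_append_right (by omega), Nat.add_sub_cancel_left, hmemB _ ‹_›]
        · exact hj1
        · exact hj2


/-- Lift a path decomposition of an induced subgraph to the ambient graph. -/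
lemma IsPD.lift {S : Set α} {L : List (Set S)} (h : IsPD (G.induce S) Set.univ L) :
    IsPD G S (L.map (fun B => Subtype.val '' B)) := by
  have hbag : ∀ i, bagAt (L.map (fun B => Subtype.val '' B)) i = Subtype.val '' (bagAt L i) :=
    fun i => bagAt_map_image
  have hmem : ∀ (v : α) (hv : v ∈ S) (i : ℕ),
      v ∈ bagAt (L.map (fun B => Subtype.val '' B)) i ↔ (⟨v, hv⟩ : S) ∈ bagAt L i := by
    intro v hv i
    rw [hbag]
    constructor
    · rintro ⟨x, hx, hxv⟩
      have : x = ⟨v, hv⟩ := Subtype.ext hxv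
      rwa [this] at hx
    · intro hx
      exact ⟨⟨v, hv⟩, hx, rfl⟩
  constructor
  · intro i x hx
    rw [hbag] at hx
    obtain ⟨y, _, rfl⟩ := hx
    exact y.2
  · intro v hv
    obtain ⟨i, hi⟩ := h.cover ⟨v, hv⟩ (Set.mem_univ _)
    exact ⟨i, (hmem v hv i).mpr hi⟩
  · intro v i j k hij hjk hvi hvk
    have hv : v ∈ S := by
      have := hbag i ▸ hvi
      obtain ⟨y, _, rfl⟩ := this
      exact y.2
    rw [hmem v hv] at hvi hvk ⊢
    exact h.contig _ i j k hij hjk hvi hvk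
  · intro u v hadj hu hv
    have hadj' : (G.induce S).Adj ⟨u, hu⟩ ⟨v, hv⟩ := by
      simp [hadj]
    obtain ⟨i, hi1, hi2⟩ := h.edge _ _ hadj' (Set.mem_univ _) (Set.mem_univ _)
    exact ⟨i, (hmem u hu i).mpr hi1, (hmem v hv i).mpr hi2⟩

lemma Bnd.lift {S : Set α} {L : List (Set S)} {k : ℕ} (h : Bnd L k) :
    Bnd (L.map (fun B => Subtype.val '' B)) k := by
  intro i
  rw [bagAt_map_image]
  rw [Set.ncard_image_of_injective _ Subtype.val_injective]
  exact h i

/-- Walks within a component give reachability in the induced subgraph. -/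
lemma reach_induce {C : Set α} : ∀ {a b : α} (p : (GD G S).Walk a b)
    (hs : ∀ y ∈ p.support, y ∈ C), (G.induce C).Reachable ⟨a, hs a p.start_mem_support⟩
      ⟨b, hs b p.end_mem_support⟩ := by
  intro a b p
  induction p with
  | nil => intro hs; exact Reachable.refl _
  | @cons a c b h q ih =>
    intro hs
    have h1 : (G.induce C).Adj ⟨a, hs a (by simp)⟩ ⟨c, hs c (by simp [Walk.start_mem_support])⟩ := by
      simp [h.1]
    exact h1.reachable.trans (ih fun y hy => hs y (by simp [hy]))

/-- The induced graph on a component of a restriction is connected. -/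
lemma induce_CC_connected (hu : u ∈ S) : (G.induce (CC G S u)).Connected := by
  rw [connected_iff]
  refine ⟨?_, ⟨⟨u, mem_CC_self⟩⟩⟩
  intro x y
  obtain ⟨px⟩ := x.2
  obtain ⟨py⟩ := y.2
  have hsup : ∀ z ∈ (px.reverse.append py).support, z ∈ CC G S u := by
    intro z hz
    rcases (Walk.mem_support_append_iff _ _).mp hz with hz' | hz'
    · rw [Walk.support_reverse] at hz'
      exact reach_of_mem_support px z (List.mem_reverse.mp hz')
    · exact reach_of_mem_support py z hz'
  have := reach_induce (px.reverse.append py) hsup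
  have hx : (⟨x.1, x.2⟩ : CC G S u) = x := rfl
  have hy : (⟨y.1, y.2⟩ : CC G S u) = y := rfl
  convert this using 2 <;> exact Subtype.ext rfl

/-- Induced subgraphs of acyclic graphs are acyclic. -/
lemma induce_acyclic (hac : G.IsAcyclic) {C : Set α} : (G.induce C).IsAcyclic := by
  intro v p hp
  have hinj : Function.Injective (fun x : C => (x : α)) := Subtype.val_injective
  have := hp.map (f := SimpleGraph.Hom.comap (Subtype.val) G) hinj
  exact hac _ this

/-- Decomposition of a "forest part": a set all of whose components are small. -/
lemma forestPD [Fintype α] (hac : G.IsAcyclic) {m fm : ℕ}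
    (htree : ∀ (β : Type u) [Fintype β] (H : SimpleGraph β), H.IsTree →
      Fintype.card β ≤ fm → ∃ L : List (Set β), IsPD H Set.univ L ∧ Bnd L m) :
    ∀ (n : ℕ) (S : Set α), S.ncard ≤ n → (∀ x ∈ S, (CC G S x).ncard ≤ fm) →
      ∃ L : List (Set α), IsPD G S L ∧ Bnd L m := by
  intro n
  induction n with
  | zero =>
    intro S hS _
    have : S = ∅ := by
      rw [← Set.ncard_eq_zero (Set.toFinite S)]
      omega
    subst this
    exact ⟨[], IsPD.empty G, fun i => by simp [bagAt_nil]⟩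
  | succ n ih =>
    intro S hS hcomp
    rcases Set.eq_empty_or_nonempty S with rfl | ⟨x₀, hx₀⟩
    · exact ⟨[], IsPD.empty G, fun i => by simp [bagAt_nil]⟩
    · set C := CC G S x₀ with hC
      have hCS : C ⊆ S := CC_subset hx₀
      have hx₀C : x₀ ∈ C := mem_CC_self
      -- decompose the component C via the tree hypothesis
      letI : Fintype C := (Set.toFinite C).fintype
      have htreeC : (G.induce C).IsTree :=
        ⟨induce_CC_connected hx₀, induce_acyclic hac⟩
      have hcard : Fintype.card C ≤ fm := by
        rw [← Nat.card_eq_fintype_card, Nat.card_coe_set_eq]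
        exact hcomp x₀ hx₀
      obtain ⟨LC, hLC, hLCb⟩ := htree C (G.induce C) htreeC hcard
      have hLC' := hLC.lift
      have hLCb' := hLCb.lift
      -- decompose the rest by induction
      have hS' : (S \ C).ncard ≤ n := by
        have hlt : (S \ C).ncard < S.ncard :=
          Set.ncard_lt_ncard ⟨Set.diff_subset, fun hsub => (hsub hx₀).2 hx₀C⟩ (Set.toFinite S)
        omega
      have hcomp' : ∀ x ∈ S \ C, (CC G (S \ C) x).ncard ≤ fm := by
        intro x hx
        exact le_trans (Set.ncard_le_ncard (CC_mono Set.diff_subset) (Set.toFinite _))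
          (hcomp x hx.1)
      obtain ⟨LR, hLR, hLRb⟩ := ih (S \ C) hS' hcomp'
      have hnoedge : ∀ a b, G.Adj a b → a ∈ C → b ∈ S \ C → False := by
        intro a b hadj ha hb
        have hbC : b ∈ CC G S a := adj_mem_CC (hCS ha) hb.1 hadj
        rw [CC_eq_of_mem ha] at hbC
        exact hb.2 hbC
      have hdisj : Disjoint C (S \ C) := Set.disjoint_sdiff_right
      have := hLC'.concat hLR hdisj hnoedge
      rw [Set.union_diff_cancel hCS] at this
      exact ⟨_, this, hLCb'.append hLRb⟩


/-- Assembling the blocks along the path into one decomposition. -/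
lemma assemble {A : α → Set α} {F : α → List (Set α)} {k : ℕ} (hk : 1 ≤ k) :
    ∀ l : List α, l ≠ [] → l.Chain' G.Adj → l.Nodup →
    (∀ q ∈ l, IsPD G (A q) (F q)) →
    (∀ q ∈ l, Bnd (F q) k) →
    (∀ q ∈ l, ∀ q' ∈ l, q ∉ A q') →
    (∀ q ∈ l, ∀ q' ∈ l, q ≠ q' → Disjoint (A q) (A q')) →
    (∀ q ∈ l, ∀ q' ∈ l, ∀ x ∈ A q, G.Adj q' x → q' = q) →
    (∀ q ∈ l, ∀ q' ∈ l, q ≠ q' → ∀ x ∈ A q, ∀ y ∈ A q', ¬ G.Adj x y) →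
    (∀ (pre mid post : List α) (a b : α),
        l = pre ++ a :: (mid ++ b :: post) → mid ≠ [] → ¬ G.Adj a b) →
    ∃ L : List (Set α), IsPD G (⋃ q ∈ {x | x ∈ l}, insert q (A q)) L ∧ Bnd L (k+1) ∧
      ∀ (hne : l ≠ []), bagAt L 0 = {l.head hne} := by
  intro l
  induction l with
  | nil => intro h; exact absurd rfl h
  | cons q rest ih =>
    intro _ hch hnd hIs hB hql hdisj hatt hAe hconsec
    have hqmem : q ∈ q :: rest := by simp
    have hqnA : q ∉ A q := hql q hqmem q hqmem
    have hblock : IsPD G (insert q (A q)) ({q} :: (F q).map (insert q)) :=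
      (hIs q hqmem).addVert hqnA
    have hblockB : Bnd ({q} :: (F q).map (insert q)) (k+1) := (hB q hqmem).addVert q
    match rest with
    | [] =>
      refine ⟨{q} :: (F q).map (insert q), ?_, hblockB, fun _ => rfl⟩
      have : (⋃ q' ∈ {x | x ∈ [q]}, insert q' (A q')) = insert q (A q) := by
        ext x
        simp
      rwa [this]
    | r :: rest' =>
      have hsubl : ∀ q' ∈ r :: rest', q' ∈ q :: r :: rest' := fun q' h => by simp [List.mem_cons.mp h]
      obtain ⟨L2, hL2, hL2B, hL2head⟩ := ih (by simp) hch.tail (List.nodup_cons.mp hnd).2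
        (fun q' h => hIs q' (hsubl q' h))
        (fun q' h => hB q' (hsubl q' h))
        (fun q' h q'' h' => hql q' (hsubl q' h) q'' (hsubl q'' h'))
        (fun q' h q'' h' hne => hdisj q' (hsubl q' h) q'' (hsubl q'' h') hne)
        (fun q' h q'' h' x hx hadj => hatt q' (hsubl q' h) q'' (hsubl q'' h') x hx hadj)
        (fun q' h q'' h' hne x hx y hy => hAe q' (hsubl q' h) q'' (hsubl q'' h') hne x hx y hy)
        (fun pre mid post a b heq hne => hconsec (q :: pre) mid post a b (by rw [heq]; rfl) hne)
      have hheadL2 : bagAt L2 0 = {r} := hL2head (by simp)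
      match L2, hL2, hL2B, hheadL2 with
      | [], _, _, hheadL2 =>
        exfalso
        rw [bagAt_nil] at hheadL2
        have : r ∈ (∅ : Set α) := by rw [hheadL2]; exact rfl
        exact this
      | B0 :: T, hL2, hL2B, hheadL2 =>
        rw [bagAt_cons_zero] at hheadL2
        subst hheadL2
        have hqrest : q ∉ r :: rest' := (List.nodup_cons.mp hnd).1
        -- disjointness of the first block support from the rest support
        have hdisj' : Disjoint (insert q (A q)) (⋃ q' ∈ {x | x ∈ r :: rest'}, insert q' (A q')) := by
          rw [Set.disjoint_left]
          intro x hx hx'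
          simp only [Set.mem_iUnion, Set.mem_setOf_eq] at hx'
          obtain ⟨q', hq', hxq'⟩ := hx'
          have hq'l : q' ∈ q :: r :: rest' := hsubl q' hq'
          have hqq' : q ≠ q' := fun h => hqrest (h ▸ hq')
          rcases Set.mem_insert_iff.mp hx with rfl | hxA
          · rcases Set.mem_insert_iff.mp hxq' with h | h
            · exact hqq' h
            · exact hql x hqmem q' hq'l h
          · rcases Set.mem_insert_iff.mp hxq' with rfl | h
            · exact hql x hq'l q hqmem hxA
            · exact Set.disjoint_left.mp (hdisj q hqmem q' hq'l hqq') hxA h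
        -- the cross-edge condition
        have hedge : ∀ u v, G.Adj u v → u ∈ insert q (A q) →
            v ∈ (⋃ q' ∈ {x | x ∈ r :: rest'}, insert q' (A q')) → u = q ∧ v ∈ ({r} : Set α) := by
          intro u v hadj hu hv
          simp only [Set.mem_iUnion, Set.mem_setOf_eq] at hv
          obtain ⟨q', hq', hvq'⟩ := hv
          have hq'l : q' ∈ q :: r :: rest' := hsubl q' hq'
          have hqq' : q ≠ q' := fun h => hqrest (h ▸ hq')
          rcases Set.mem_insert_iff.mp hu with rfl | huA
          · rcases Set.mem_insert_iff.mp hvq' with rfl | hvA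
            · -- v = q', adjacent to q; must be r
              refine ⟨rfl, ?_⟩
              rcases List.mem_cons.mp hq' with rfl | hv'
              · simp
              · obtain ⟨mid, post, hsplit⟩ := List.append_of_mem hv'
                exact absurd hadj (hconsec [] (r :: mid) post u v
                  (by rw [hsplit]; rfl) (by simp))
            · exact absurd (hatt q' hq'l u hqmem v hvA hadj) hqq'
          · rcases Set.mem_insert_iff.mp hvq' with rfl | hvA
            · exact absurd (hatt q hqmem v hq'l u huA hadj.symm) hqq'.symm
            · exact absurd hadj (hAe q hqmem q' hq'l hqq' u huA v hvA)
        have hqall : ∀ i, i < ({q} :: (F q).map (insert q)).length →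
            q ∈ bagAt ({q} :: (F q).map (insert q)) i := by
          intro i hi
          match i with
          | 0 => rw [bagAt_cons_zero]; simp
          | i+1 =>
            rw [addVert_bag_succ, if_pos (by simpa using hi)]
            simp
        have hglue := hblock.concat3 hL2 hdisj' (Set.mem_insert _ _) hqall hedge
        refine ⟨({q} :: (F q).map (insert q)) ++ (insert q {r}) :: T, ?_, ?_, ?_⟩
        · have hsupp : insert q (A q) ∪ (⋃ q' ∈ {x | x ∈ r :: rest'}, insert q' (A q')) =
              ⋃ q' ∈ {x | x ∈ q :: r :: rest'}, insert q' (A q') := by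
            ext x
            simp only [Set.mem_union, Set.mem_iUnion, Set.mem_setOf_eq, List.mem_cons]
            constructor
            · rintro (h | ⟨q', hq', h⟩)
              · exact ⟨q, Or.inl rfl, h⟩
              · exact ⟨q', Or.inr hq', h⟩
            · rintro ⟨q', hq' | hq', h⟩
              · exact Or.inl (hq' ▸ h)
              · exact Or.inr ⟨q', hq', h⟩
          rwa [hsupp] at hglue
        · refine hblockB.append ?_
          intro i
          match i with
          | 0 =>
            rw [bagAt_cons_zero]
            have : ({q} : Set α).ncard = 1 := Set.ncard_singleton q
            have h2 : (insert q ({r} : Set α)).ncard ≤ 2 := by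
              refine le_trans (Set.ncard_insert_le _ _) ?_
              simp [Set.ncard_singleton]
            omega
          | i+1 =>
            rw [bagAt_cons_succ]
            have := hL2B (i+1)
            rwa [bagAt_cons_succ] at this
        · intro hne
          rw [bagAt_append_left (by simp)]
          rfl


/-- The size bound function: trees with at most `fbound m` vertices have
path decompositions with bags of size at most `m`. -/
def fbound : ℕ → ℕ
  | 0 => 0
  | 1 => 1
  | (m+2) => 3 * fbound (m+1) + 3

lemma fbound_ge : ∀ m : ℕ, 1 ≤ m → 3 ^ m ≤ 2 * fbound m + 3
  | 0, h => by omega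
  | 1, _ => by norm_num [fbound]
  | (m+2), _ => by
    have ih := fbound_ge (m+1) (by omega)
    have : fbound (m+2) = 3 * fbound (m+1) + 3 := rfl
    rw [this, pow_succ]
    omega

lemma getElem_split {β : Type u} {l pre post : List β} {a : β} (heq : l = pre ++ a :: post) :
    ∃ h : pre.length < l.length, l[pre.length]'h = a := by
  subst heq
  have h : pre.length < (pre ++ a :: post).length := by simp
  refine ⟨h, ?_⟩
  rw [List.getElem_append_right (le_refl pre.length)]
  simp

lemma getElem_split' {β : Type u} (i : ℕ) {l pre post : List β} {a : β}
    (heq : l = pre ++ a :: post) (hieq : i = pre.length) :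
    ∃ h : i < l.length, l[i]'h = a := by
  subst hieq
  exact getElem_split heq

/-- The main theorem: trees of size at most `fbound m` have path decompositions
with all bags of size at most `m`. -/
lemma treePD : ∀ (m : ℕ) (β : Type u) [Fintype β] (H : SimpleGraph β), H.IsTree →
    Fintype.card β ≤ fbound m → ∃ L : List (Set β), IsPD H Set.univ L ∧ Bnd L m := by
  intro m
  induction m using Nat.strong_induction_on with
  | _ m ih =>
  match m, ih with
  | 0, ih =>
    intro β _ H hH hcard
    exfalso
    have h1 : Nonempty β := hH.isConnected.nonempty
    have h2 := Fintype.card_pos (α := β)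
    have : fbound 0 = 0 := rfl
    omega
  | 1, ih =>
    intro β _ H hH hcard
    have h1 : Nonempty β := hH.isConnected.nonempty
    have h2 := Fintype.card_pos (α := β)
    have hcard1 : Fintype.card β = 1 := by
      have : fbound 1 = 1 := rfl
      omega
    refine ⟨[Set.univ], ?_, ?_⟩
    · constructor
      · intro i x _
        trivial
      · intro v _
        exact ⟨0, by rw [bagAt_cons_zero]; trivial⟩
      · intro v i j k hij hjk hvi hvk
        match j with
        | 0 => rw [bagAt_cons_zero]; trivial
        | j+1 =>
          match k, hjk with
          | k+1, _ =>
            rw [bagAt_cons_succ, bagAt_nil] at hvk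
            exact absurd hvk (Set.notMem_empty v)
      · intro x y hadj _ _
        have : x = y := Fintype.card_le_one_iff.mp (by omega) x y
        exact absurd this hadj.ne
    · intro i
      match i with
      | 0 =>
        rw [bagAt_cons_zero, Set.ncard_univ, Nat.card_eq_fintype_card, hcard1]
      | i+1 =>
        rw [bagAt_cons_succ, bagAt_nil]
        simp
  | (m+2), ih =>
    intro β _ H hH hcard
    classical
    obtain ⟨l, hlne, hch, hnd, hcomps⟩ := heavy_path (s := fbound (m+1)) hH (by
      have : fbound (m+2) = 3 * fbound (m+1) + 3 := rfl
      omega)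
    have hac := hH.IsAcyclic
    set Aset : β → Set β := fun q => {x | x ∉ l ∧ ∃ c ∈ CC H {y | y ∉ l} x, H.Adj q c} with hA
    have hattU : ∀ x, x ∉ l → ∀ q ∈ l, ∀ q' ∈ l,
        (∃ c ∈ CC H {y | y ∉ l} x, H.Adj q c) →
        (∃ c' ∈ CC H {y | y ∉ l} x, H.Adj q' c') → q = q' := by
      intro x hx q hq q' hq' h1 h2
      obtain ⟨c, hc, hadj⟩ := h1
      obtain ⟨c', hc', hadj'⟩ := h2
      obtain ⟨i, hi, rfl⟩ := List.mem_iff_getElem.mp hq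
      obtain ⟨j, hj, rfl⟩ := List.mem_iff_getElem.mp hq'
      have hij := att_unique hac hch hnd hx hc hc' hi hj hadj hadj'
      subst hij
      rfl
    have hFex : ∀ q : β, ∃ Lq : List (Set β), IsPD H (Aset q) Lq ∧ Bnd Lq (m+1) := by
      intro q
      refine forestPD hac
        (fun γ _ H' h1 h2 => ih (m+1) (by omega) γ H' h1 h2)
        (Aset q).ncard (Aset q) le_rfl ?_
      intro x hx
      refine le_trans (Set.ncard_le_ncard (CC_mono ?_) (Set.toFinite _)) (hcomps x hx.1)
      intro y hy
      exact hy.1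
    choose Fq hF1 hF2 using hFex
    obtain ⟨L, hL, hLB, _⟩ := assemble (G := H) (A := Aset) (F := Fq) (k := m+1)
      (by omega) l hlne hch hnd
      (fun q _ => hF1 q)
      (fun q _ => hF2 q)
      (fun q hq q' _ => fun hmem => hmem.1 hq)
      (by
        intro q hq q' hq' hne
        rw [Set.disjoint_left]
        intro x hx hx'
        exact hne (hattU x hx.1 q hq q' hq' hx.2 hx'.2))
      (by
        intro q hq q' hq' x hx hadj
        exact hattU x hx.1 q' hq' q hq ⟨x, mem_CC_self, hadj⟩ hx.2)
      (by
        intro q hq q' hq' hne x hx y hy hadj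
        have hyx : y ∈ CC H {y' | y' ∉ l} x := adj_mem_CC (by simpa using hx.1) (by simpa using hy.1) hadj
        obtain ⟨c', hc', hadj'⟩ := hy.2
        rw [CC_eq_of_mem hyx] at hc'
        exact hne (hattU x hx.1 q hq q' hq' hx.2 ⟨c', hc', hadj'⟩))
      (by
        intro pre mid post a b heq hmidne hadj
        obtain ⟨hi, ha⟩ := getElem_split heq
        have heq2 : l = (pre ++ a :: mid) ++ b :: post := by rw [heq]; simp
        have hmid : 1 ≤ mid.length := by
          rcases mid with _ | ⟨c, mid'⟩
          · exact absurd rfl hmidne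
          · simp
        obtain ⟨hj, hb⟩ := getElem_split' (pre.length + 1 + mid.length) heq2
          (by simp; omega)
        rw [← ha, ← hb] at hadj
        exact no_far_adj hac hch hnd hi hj (by omega) hadj)
    have huniv : (⋃ q ∈ {x | x ∈ l}, insert q (Aset q)) = Set.univ := by
      ext x
      simp only [Set.mem_iUnion, Set.mem_univ, iff_true, Set.mem_setOf_eq]
      by_cases hx : x ∈ l
      · exact ⟨x, hx, Set.mem_insert _ _⟩
      · obtain ⟨i, hi, c, hc, hadj⟩ := att_exists hH.isConnected hlne hx
        exact ⟨l[i], List.getElem_mem _, Set.mem_insert_of_mem _ ⟨hx, c, hc, hadj⟩⟩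
    rw [huniv] at hL
    exact ⟨L, hL, hLB⟩

end TreePW

/-- Every `n`-vertex tree has pathwidth at most `log₃(2n+1)`. -/
theorem stmt8 (G : SimpleGraph V) [Fintype V] (hG : G.IsTree) :
    ∃ P : PathDecomp G, ∀ i : ℕ,
      ((P.bags i).ncard : ℝ) ≤ Real.logb 3 (2 * Fintype.card V + 1) + 1 := by
  classical
  set n := Fintype.card V with hn
  have hne : Nonempty V := hG.isConnected.nonempty
  have hnpos : 1 ≤ n := Fintype.card_pos
  set k := Nat.log 3 (2 * n + 1) with hk
  have h3k : 3 ^ k ≤ 2 * n + 1 := Nat.pow_log_le_self 3 (by omega)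
  have h3k1 : 2 * n + 1 < 3 ^ (k + 1) := Nat.lt_pow_succ_log_self (by norm_num) _
  have hodd : Odd (3 ^ (k+1) : ℕ) := Odd.pow ⟨1, by norm_num⟩
  obtain ⟨t, ht⟩ := hodd
  have hcard : n ≤ TreePW.fbound (k+1) := by
    have := TreePW.fbound_ge (k+1) (by omega)
    omega
  obtain ⟨L, hL, hLB⟩ := TreePW.treePD (k+1) V G hG hcard
  refine ⟨⟨fun i => TreePW.bagAt L i, ?_, ?_, ?_⟩, ?_⟩
  · intro v
    exact hL.cover v trivial
  · intro v i j k' hij hjk hvi hvk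
    exact hL.contig v i j k' hij hjk hvi hvk
  · intro u v hadj
    exact hL.edge u v hadj trivial trivial
  · intro i
    have hb := hLB i
    have hklog : (k : ℝ) ≤ Real.logb 3 (2 * (n:ℝ) + 1) := by
      have h1 : ((3:ℝ) ^ k) ≤ (2 * (n:ℝ) + 1) := by exact_mod_cast h3k
      have h2 : Real.logb 3 ((3:ℝ)^k) ≤ Real.logb 3 (2*(n:ℝ)+1) :=
        Real.logb_le_logb_of_le (by norm_num) (by positivity) h1
      rwa [Real.logb_pow, Real.logb_self_eq_one (by norm_num), mul_one] at h2
    have hble : ((TreePW.bagAt L i).ncard : ℝ) ≤ (k:ℝ) + 1 := by exact_mod_cast hb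
    simp only [PathDecomp.bags]
    linarith
end

section
/- For a connected bipartite outerplanar graph G with a fixed vertex v, every bounded face cycle C of an outerplanar embedding of G contains a unique vertex at minimum distance from v, and the distances from v increase monotonically along both paths of C from this nearest vertex to a unique farthest vertex. -/
open SimpleGraph

universe u

variable {V : Type u}

namespace Stmt17Aux
variable {V : Type u} {G : SimpleGraph V}

lemma edge_getVert_mem {u w : V} (p : G.Walk u w) {i : ℕ} (hi : i < p.length) :
    s(p.getVert i, p.getVert (i+1)) ∈ p.edges := by
  induction p generalizing i with
  | nil => simp at hi
  | cons h q ih =>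
    cases i with
    | zero =>
      simp [SimpleGraph.Walk.getVert_zero, SimpleGraph.Walk.getVert_cons_succ,
        SimpleGraph.Walk.edges_cons]
    | succ n =>
      have hn : n < q.length := by
        simpa [SimpleGraph.Walk.length_cons] using hi
      simpa [SimpleGraph.Walk.getVert_cons_succ, SimpleGraph.Walk.edges_cons] using
        Or.inr (ih hn)

lemma mem_edges_getVert {u w : V} (p : G.Walk u w) {e : Sym2 V} (he : e ∈ p.edges) :
    ∃ i < p.length, e = s(p.getVert i, p.getVert (i+1)) := by
  induction p with
  | nil => simp at he
  | cons h q ih =>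
    rw [SimpleGraph.Walk.edges_cons] at he
    rcases List.mem_cons.mp he with rfl | he
    · exact ⟨0, by simp [SimpleGraph.Walk.length_cons], by
        simp [SimpleGraph.Walk.getVert_zero, SimpleGraph.Walk.getVert_cons_succ]⟩
    · obtain ⟨i, hi, hei⟩ := ih he
      exact ⟨i + 1, by simpa [SimpleGraph.Walk.length_cons] using Nat.succ_lt_succ hi, by
        simpa [SimpleGraph.Walk.getVert_cons_succ] using hei⟩

lemma support_getElem? {u w : V} (p : G.Walk u w) {i : ℕ} (hi : i ≤ p.length) :
    p.support[i]? = some (p.getVert i) := by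
  induction p generalizing i with
  | nil =>
    have : i = 0 := by simpa using hi
    subst this
    simp [SimpleGraph.Walk.support_nil]
  | cons h q ih =>
    cases i with
    | zero => simp [SimpleGraph.Walk.support_cons, SimpleGraph.Walk.getVert_zero]
    | succ n =>
      have hn : n ≤ q.length := by simpa [SimpleGraph.Walk.length_cons] using hi
      simpa [SimpleGraph.Walk.support_cons, SimpleGraph.Walk.getVert_cons_succ] using ih hn

lemma cycle_getVert_inj {v : V} {c : G.Walk v v} (hc : c.IsCycle) {i j : ℕ}
    (hi : i < c.length) (hj : j < c.length) (h : c.getVert i = c.getVert j) : i = j := by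
  have hk : 3 ≤ c.length := hc.three_le_length
  have hlen : c.support.tail.length = c.length := by
    have := SimpleGraph.Walk.length_support c
    have h2 : c.support.length = c.support.tail.length + 1 := by
      cases hs : c.support with
      | nil => exact absurd hs (SimpleGraph.Walk.support_ne_nil c)
      | cons a l => simp [hs]
    omega
  have hcons : c.support = v :: c.support.tail := by
    cases hs : c.support with
    | nil => exact absurd hs (SimpleGraph.Walk.support_ne_nil c)
    | cons a l =>
      have : a = v := by
        have h0 := support_getElem? c (Nat.zero_le _)
        rw [hs] at h0
        have := h0.symm
        simpa [SimpleGraph.Walk.getVert_zero] using this.symm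
      simp [this]
  have tailget : ∀ m : ℕ, 1 ≤ m → m ≤ c.length → c.support.tail[m-1]? = some (c.getVert m) := by
    intro m h1 h2
    have := support_getElem? c h2
    rcases Nat.exists_eq_add_of_le h1 with ⟨n, rfl⟩
    rw [hcons] at this
    rw [Nat.add_comm 1 n] at this ⊢
    simpa using this
  have hnd := hc.support_nodup
  have endpt : ∀ m : ℕ, m < c.length → c.getVert m = v → m = 0 := by
    intro m hm hv
    by_contra h0
    have h1 : 1 ≤ m := Nat.one_le_iff_ne_zero.mpr h0
    have e1 := tailget m h1 (le_of_lt hm)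
    have e2 := tailget c.length (by omega) le_rfl
    rw [SimpleGraph.Walk.getVert_length] at e2
    rw [hv] at e1
    have := List.getElem?_inj (by omega : m - 1 < c.support.tail.length) hnd |>.mp (e1.trans e2.symm)
    omega
  rcases Nat.eq_zero_or_pos i with rfl | hi1
  · exact (endpt j hj (by rw [← h, SimpleGraph.Walk.getVert_zero])).symm
  rcases Nat.eq_zero_or_pos j with rfl | hj1
  · exact endpt i hi (by rw [h, SimpleGraph.Walk.getVert_zero])
  have e1 := tailget i hi1 (le_of_lt hi)
  have e2 := tailget j hj1 (le_of_lt hj)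
  rw [h] at e1
  have := List.getElem?_inj (by omega : i - 1 < c.support.tail.length) hnd |>.mp (e1.trans e2.symm)
  omega

def Qv {v : V} (c : G.Walk v v) (i : ℕ) : V := c.getVert (i % c.length)

section QvLemmas
variable {v : V} {c : G.Walk v v}

lemma Qv_getVert (hc : c.IsCycle) {i : ℕ} (hi : i ≤ c.length) : Qv c i = c.getVert i := by
  have hk : 3 ≤ c.length := hc.three_le_length
  rcases Nat.lt_or_ge i c.length with h | h
  · unfold Qv; rw [Nat.mod_eq_of_lt h]
  · have : i = c.length := le_antisymm hi h
    subst this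
    unfold Qv
    rw [Nat.mod_self, SimpleGraph.Walk.getVert_zero, SimpleGraph.Walk.getVert_length]

lemma Qv_congr {i j : ℕ} (h : i % c.length = j % c.length) :
    Qv c i = Qv c j := by unfold Qv; rw [h]

lemma Qv_add_length (i : ℕ) : Qv c (i + c.length) = Qv c i := by
  apply Qv_congr; exact Nat.add_mod_right i c.length

lemma Qv_mem (hc : c.IsCycle) (i : ℕ) : Qv c i ∈ c.support := by
  have hk : 3 ≤ c.length := hc.three_le_length
  rw [SimpleGraph.Walk.mem_support_iff_exists_getVert]
  exact ⟨i % c.length, rfl, le_of_lt (Nat.mod_lt _ (by omega))⟩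

lemma Qv_adj (hc : c.IsCycle) (i : ℕ) : G.Adj (Qv c i) (Qv c (i+1)) := by
  have hk : 3 ≤ c.length := hc.three_le_length
  have hmod : i % c.length < c.length := Nat.mod_lt _ (by omega)
  have key : (i+1) % c.length = (i % c.length + 1) % c.length := by
    conv_lhs => rw [Nat.add_mod, Nat.mod_eq_of_lt (show 1 < c.length by omega)]
  rcases Nat.lt_or_ge (i % c.length) (c.length - 1) with h | h
  · have h1 : (i+1) % c.length = i % c.length + 1 := by
      rw [key, Nat.mod_eq_of_lt (by omega)]
    unfold Qv
    rw [h1]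
    exact c.adj_getVert_succ hmod
  · have h2 : i % c.length = c.length - 1 := by omega
    have h1 : (i+1) % c.length = 0 := by
      rw [key, h2, show c.length - 1 + 1 = c.length by omega, Nat.mod_self]
    unfold Qv
    rw [h1, h2, SimpleGraph.Walk.getVert_zero]
    have := c.adj_getVert_succ (i := c.length - 1) (by omega)
    rwa [show c.length - 1 + 1 = c.length by omega, SimpleGraph.Walk.getVert_length] at this

lemma Qv_succ_mod (hc : c.IsCycle) (i : ℕ) :
    (i+1) % c.length = (i % c.length + 1) % c.length := by
  have hk : 3 ≤ c.length := hc.three_le_length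
  conv_lhs => rw [Nat.add_mod, Nat.mod_eq_of_lt (show 1 < c.length by omega)]

lemma Qv_edge (hc : c.IsCycle) (i : ℕ) : s(Qv c i, Qv c (i+1)) ∈ c.edges := by
  have hk : 3 ≤ c.length := hc.three_le_length
  have hmod : i % c.length < c.length := Nat.mod_lt _ (by omega)
  have key := Qv_succ_mod hc i
  rcases Nat.lt_or_ge (i % c.length) (c.length - 1) with h | h
  · have h1 : (i+1) % c.length = i % c.length + 1 := by
      rw [key, Nat.mod_eq_of_lt (by omega)]
    unfold Qv
    rw [h1]
    exact edge_getVert_mem c hmod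
  · have h2 : i % c.length = c.length - 1 := by omega
    have h1 : (i+1) % c.length = 0 := by
      rw [key, h2, show c.length - 1 + 1 = c.length by omega, Nat.mod_self]
    unfold Qv
    rw [h1, h2, SimpleGraph.Walk.getVert_zero]
    have := edge_getVert_mem c (i := c.length - 1) (by omega)
    rwa [show c.length - 1 + 1 = c.length by omega, SimpleGraph.Walk.getVert_length] at this

lemma Qv_inj (hc : c.IsCycle) {i j : ℕ} (h : Qv c i = Qv c j) :
    i % c.length = j % c.length := by
  have hk : 3 ≤ c.length := hc.three_le_length
  exact cycle_getVert_inj hc (Nat.mod_lt _ (by omega)) (Nat.mod_lt _ (by omega)) h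

lemma Qv_exists (hc : c.IsCycle) {x : V} (hx : x ∈ c.support) :
    ∃ i < c.length, Qv c i = x := by
  have hk : 3 ≤ c.length := hc.three_le_length
  rw [SimpleGraph.Walk.mem_support_iff_exists_getVert] at hx
  obtain ⟨n, hn, hle⟩ := hx
  rcases Nat.lt_or_ge n c.length with h | h
  · exact ⟨n, h, by rw [Qv_getVert hc (le_of_lt h), hn]⟩
  · have : n = c.length := le_antisymm hle h
    subst this
    exact ⟨0, by omega, by rw [Qv_getVert hc (by omega), SimpleGraph.Walk.getVert_zero,
      ← SimpleGraph.Walk.getVert_length c, hn]⟩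

lemma Qv_edge_index (hc : c.IsCycle) {i j : ℕ}
    (h : s(Qv c i, Qv c (i+1)) = s(Qv c j, Qv c (j+1))) : i % c.length = j % c.length := by
  have hk : 3 ≤ c.length := hc.three_le_length
  rw [Sym2.eq_iff] at h
  rcases h with ⟨h1, _⟩ | ⟨h1, h2⟩
  · exact Qv_inj hc h1
  · exfalso
    have m1 : i % c.length = (j+1) % c.length := Qv_inj hc h1
    have m2 : (i+1) % c.length = j % c.length := Qv_inj hc h2
    have m3 : (i+1+1) % c.length = (j+1) % c.length := by
      rw [Qv_succ_mod hc (i+1), m2, ← Qv_succ_mod hc j]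
    have m4 : (i+2) % c.length = i % c.length := by
      rw [show i+2 = i+1+1 by omega, m3, ← m1]
    have : (i+2) ≡ i [MOD c.length] := m4
    have hdvd : c.length ∣ (i+2) - i := (Nat.modEq_iff_dvd' (by omega)).mp this.symm
    rw [show i+2-i = 2 by omega] at hdvd
    have := Nat.le_of_dvd (by omega) hdvd
    omega

lemma Qv_window_inj (hc : c.IsCycle) {lo i j : ℕ} (hi1 : lo ≤ i) (hi2 : i < lo + c.length)
    (hj1 : lo ≤ j) (hj2 : j < lo + c.length) (h : i % c.length = j % c.length) : i = j := by
  have hk : 3 ≤ c.length := hc.three_le_length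
  rcases Nat.lt_trichotomy i j with hlt | he | hlt
  · exfalso
    have : i ≡ j [MOD c.length] := h
    have hdvd : c.length ∣ j - i := (Nat.modEq_iff_dvd' (by omega)).mp this
    rcases Nat.eq_zero_or_pos (j - i) with h0 | h0
    · omega
    · have := Nat.le_of_dvd h0 hdvd; omega
  · exact he
  · exfalso
    have : j ≡ i [MOD c.length] := h.symm
    have hdvd : c.length ∣ i - j := (Nat.modEq_iff_dvd' (by omega)).mp this
    rcases Nat.eq_zero_or_pos (i - j) with h0 | h0
    · omega
    · have := Nat.le_of_dvd h0 hdvd; omega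

lemma Qv_neighbor (hc : c.IsCycle) {i : ℕ} {x : V} (h : s(Qv c i, x) ∈ c.edges) :
    x = Qv c (i+1) ∨ x = Qv c (i + (c.length - 1)) := by
  have hk : 3 ≤ c.length := hc.three_le_length
  obtain ⟨j, hj, hej⟩ := mem_edges_getVert c h
  have g1 : c.getVert j = Qv c j := (Qv_getVert hc (le_of_lt hj)).symm
  have g2 : c.getVert (j+1) = Qv c (j+1) := (Qv_getVert hc (by omega)).symm
  rw [g1, g2, Sym2.eq_iff] at hej
  rcases hej with ⟨h1, h2⟩ | ⟨h1, h2⟩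
  · left
    have := Qv_inj hc h1
    rw [h2]
    apply Qv_congr
    rw [Qv_succ_mod hc j, Qv_succ_mod hc i, this]
  · right
    -- Qv c i = Qv c (j+1), x = Qv c j ; show Qv c j = Qv c (i + (c.length -1))
    have hmi := Qv_inj hc h1
    rw [h2]
    apply Qv_congr
    -- j ≡ i + (k-1) [MOD k] since i ≡ j+1
    have : (j + 1 + (c.length - 1)) % c.length = j % c.length := by
      rw [show j + 1 + (c.length - 1) = j + c.length by omega]
      exact Nat.add_mod_right j c.length
    calc j % c.length = (j + 1 + (c.length - 1)) % c.length := this.symm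
      _ = (i + (c.length - 1)) % c.length := by
          rw [Nat.add_mod (j+1), Nat.add_mod i, hmi]
    

end QvLemmas

section Parity

lemma walk_length_parity (col : G.Coloring (Fin 2)) {a b : V} (p : G.Walk a b) :
    ((p.length : ZMod 2)) = ((col a).val : ZMod 2) - ((col b).val : ZMod 2) := by
  induction p with
  | nil => simp
  | @cons x y z h q ih =>
    have hne : col x ≠ col y := col.valid h
    have key : ((col x).val : ZMod 2) - ((col y).val : ZMod 2) = 1 := by
      have : ∀ m n : Fin 2, m ≠ n → ((m.val : ZMod 2) - (n.val : ZMod 2) = 1) := by decide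
      exact this _ _ hne
    rw [SimpleGraph.Walk.length_cons]
    push_cast
    rw [ih]
    rw [show ((col x).val : ZMod 2) - ((col z).val : ZMod 2)
        = (((col x).val : ZMod 2) - ((col y).val : ZMod 2))
          + (((col y).val : ZMod 2) - ((col z).val : ZMod 2)) by ring, key]
    ring

lemma adj_dist_parity (hconn : G.Connected) (hbip : G.Colorable 2) (r : V) {x y : V}
    (h : G.Adj x y) :
    G.dist r x + 1 = G.dist r y ∨ G.dist r y + 1 = G.dist r x := by
  obtain ⟨col⟩ := hbip
  have hxy1 : G.dist x y ≤ 1 := by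
    have := SimpleGraph.dist_le (SimpleGraph.Walk.cons h SimpleGraph.Walk.nil)
    simpa using this
  have h1 : G.dist r y ≤ G.dist r x + 1 :=
    le_trans (hconn.dist_triangle (v := x)) (by omega)
  have h2 : G.dist r x ≤ G.dist r y + 1 := by
    have hyx1 : G.dist y x ≤ 1 := by
      have := SimpleGraph.dist_le (SimpleGraph.Walk.cons h.symm SimpleGraph.Walk.nil)
      simpa using this
    exact le_trans (hconn.dist_triangle (v := y)) (by omega)
  have hne : G.dist r x ≠ G.dist r y := by
    intro heq
    obtain ⟨p, hp⟩ := hconn.exists_walk_length_eq_dist r x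
    obtain ⟨q, hq⟩ := hconn.exists_walk_length_eq_dist r y
    have e1 := walk_length_parity col p
    have e2 := walk_length_parity col q
    rw [hp] at e1
    rw [hq] at e2
    rw [← heq] at e2
    have hcolxy : ((col x).val : ZMod 2) = ((col y).val : ZMod 2) := by
      have := e1.symm.trans e2
      have h3 : ((col r).val : ZMod 2) - ((col x).val : ZMod 2)
          = ((col r).val : ZMod 2) - ((col y).val : ZMod 2) := this
      linear_combination ((col r).val : ZMod 2) - ((col r).val : ZMod 2) - h3
    have hne2 : col x ≠ col y := col.valid h
    have : ∀ m n : Fin 2, m ≠ n → ((m.val : ZMod 2) ≠ (n.val : ZMod 2)) := by decide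
    exact this _ _ hne2 hcolxy
  omega

lemma exists_closer (hconn : G.Connected) {r s : V} (hd : G.dist r s ≠ 0) :
    ∃ x, G.Adj s x ∧ G.dist r x + 1 = G.dist r s := by
  have hsr : G.dist s r ≠ 0 := by rwa [SimpleGraph.dist_comm]
  obtain ⟨p, hp⟩ := SimpleGraph.exists_walk_of_dist_ne_zero hsr
  cases p with
  | nil => rw [← hp] at hsr; simp at hsr
  | @cons _ m _ h q =>
    refine ⟨m, h, ?_⟩
    have hq : q.length = G.dist s r - 1 := by
      have := hp
      rw [SimpleGraph.Walk.length_cons] at this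
      omega
    have hle : G.dist r m ≤ G.dist s r - 1 := by
      rw [SimpleGraph.dist_comm]
      rw [← hq]
      exact SimpleGraph.dist_le q
    have hge : G.dist r s ≤ G.dist r m + 1 := by
      have h1 : G.dist m s ≤ 1 := by
        have := SimpleGraph.dist_le (SimpleGraph.Walk.cons h.symm SimpleGraph.Walk.nil)
        simpa using this
      exact le_trans (hconn.dist_triangle (v := m)) (by omega)
    have : G.dist r s = G.dist s r := SimpleGraph.dist_comm ..
    omega

end Parity

section ConsecEdge

lemma consec_edge {v : V} {c : G.Walk v v} (hc : c.IsCycle) (f : V → ℕ)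
    (hinj : ∀ x ∈ c.support, ∀ y ∈ c.support, f x = f y → x = y)
    (hcross : ∀ p q x y : V, s(p,q) ∈ c.edges → s(x,y) ∈ c.edges →
      ¬ (f p < f x ∧ f x < f q ∧ f q < f y))
    {a b : V} (ha : a ∈ c.support) (hb : b ∈ c.support) (hab : f a < f b)
    (hconsec : ∀ y ∈ c.support, f y ≤ f a ∨ f b ≤ f y) :
    s(a, b) ∈ c.edges := by
  classical
  by_contra hne
  have hk : 3 ≤ c.length := hc.three_le_length
  obtain ⟨ia, hia, hQa⟩ := Qv_exists hc ha
  obtain ⟨ib', hib', hQb'⟩ := Qv_exists hc hb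
  have hab' : a ≠ b := fun h => by rw [h] at hab; omega
  have hibne : ib' ≠ ia := by
    intro h; rw [h] at hQb'; exact hab' (hQa.symm.trans hQb')
  obtain ⟨ib, hibgt, hiblt, hQb⟩ : ∃ ib, ia < ib ∧ ib < ia + c.length ∧ Qv c ib = b := by
    rcases Nat.lt_or_ge ia ib' with h | h
    · exact ⟨ib', h, by omega, hQb'⟩
    · exact ⟨ib' + c.length, by omega, by omega, by rw [Qv_add_length]; exact hQb'⟩
  -- jump lemmas
  have jumpUp : ∀ n p, f (Qv c p) ≤ f a → f b ≤ f (Qv c (p+n)) →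
      ∃ m, p ≤ m ∧ m < p+n ∧ f (Qv c m) ≤ f a ∧ f b ≤ f (Qv c (m+1)) := by
    intro n
    induction n with
    | zero => intro p h1 h2; rw [Nat.add_zero] at h2; omega
    | succ n ih =>
      intro p h1 h2
      rcases hconsec (Qv c (p+1)) (Qv_mem hc _) with h | h
      · obtain ⟨m, hm1, hm2, hm3⟩ := ih (p+1) h (by rw [show p+1+n = p+(n+1) by omega]; exact h2)
        exact ⟨m, by omega, by omega, hm3⟩
      · exact ⟨p, le_rfl, by omega, h1, h⟩
  have jumpDown : ∀ n p, f b ≤ f (Qv c p) → f (Qv c (p+n)) ≤ f a →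
      ∃ m, p ≤ m ∧ m < p+n ∧ f b ≤ f (Qv c m) ∧ f (Qv c (m+1)) ≤ f a := by
    intro n
    induction n with
    | zero => intro p h1 h2; rw [Nat.add_zero] at h2; omega
    | succ n ih =>
      intro p h1 h2
      rcases hconsec (Qv c (p+1)) (Qv_mem hc _) with h | h
      · exact ⟨p, le_rfl, by omega, h1, h⟩
      · obtain ⟨m, hm1, hm2, hm3⟩ := ih (p+1) h (by rw [show p+1+n = p+(n+1) by omega]; exact h2)
        exact ⟨m, by omega, by omega, hm3⟩
  set P : ℕ → Prop := fun m => (f (Qv c m) ≤ f a ∧ f b ≤ f (Qv c (m+1))) ∨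
      (f (Qv c (m+1)) ≤ f a ∧ f b ≤ f (Qv c m)) with hPdef
  set J : Finset ℕ := (Finset.Ico ia (ia + c.length)).filter P with hJdef
  obtain ⟨m1, hm1a, hm1b, hm1c, hm1d⟩ := jumpUp (ib - ia) ia (by rw [hQa]) (by
    rw [show ia + (ib - ia) = ib by omega, hQb])
  obtain ⟨m2, hm2a, hm2b, hm2c, hm2d⟩ := jumpDown (ia + c.length - ib) ib (by rw [hQb]) (by
    rw [show ib + (ia + c.length - ib) = ia + c.length by omega, Qv_add_length, hQa])
  have hm1J : m1 ∈ J := by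
    rw [hJdef, Finset.mem_filter, Finset.mem_Ico]
    exact ⟨⟨hm1a, by omega⟩, Or.inl ⟨hm1c, hm1d⟩⟩
  have hm2J : m2 ∈ J := by
    rw [hJdef, Finset.mem_filter, Finset.mem_Ico]
    exact ⟨⟨by omega, by omega⟩, Or.inr ⟨hm2d, hm2c⟩⟩
  have hm12 : m1 ≠ m2 := by omega
  set lov : ℕ → V := fun m => if f (Qv c m) ≤ f a then Qv c m else Qv c (m+1) with hlovdef
  set hiv : ℕ → V := fun m => if f (Qv c m) ≤ f a then Qv c (m+1) else Qv c m with hhivdef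
  have hPJ : ∀ m ∈ J, P m := by
    intro m hm
    rw [hJdef, Finset.mem_filter] at hm
    exact hm.2
  have lovle : ∀ m, P m → f (lov m) ≤ f a := by
    intro m hm
    rw [hlovdef]
    rcases hm with ⟨h1, h2⟩ | ⟨h1, h2⟩
    · simp only [if_pos h1]; exact h1
    · have : ¬ (f (Qv c m) ≤ f a) := by omega
      simp only [if_neg this]; exact h1
  have hivge : ∀ m, P m → f b ≤ f (hiv m) := by
    intro m hm
    rw [hhivdef]
    rcases hm with ⟨h1, h2⟩ | ⟨h1, h2⟩
    · simp only [if_pos h1]; exact h2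
    · have : ¬ (f (Qv c m) ≤ f a) := by omega
      simp only [if_neg this]; exact h2
  have pairset : ∀ m, s(lov m, hiv m) = s(Qv c m, Qv c (m+1)) := by
    intro m
    rw [hlovdef, hhivdef]
    by_cases h : f (Qv c m) ≤ f a
    · simp only [if_pos h]
    · simp only [if_neg h]; exact Sym2.eq_swap
  have lovsupp : ∀ m, lov m ∈ c.support := by
    intro m; rw [hlovdef]; dsimp only; split <;> exact Qv_mem hc _
  have hivsupp : ∀ m, hiv m ∈ c.support := by
    intro m; rw [hhivdef]; dsimp only; split <;> exact Qv_mem hc _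
  have edgem : ∀ m, s(lov m, hiv m) ∈ c.edges := by
    intro m; rw [pairset]; exact Qv_edge hc m
  -- select innermost spanning edge
  obtain ⟨m0, hm0J, hmax⟩ := Finset.exists_max_image J (fun m => f (lov m)) ⟨m1, hm1J⟩
  set J' : Finset ℕ := J.filter (fun m => lov m = lov m0) with hJ'def
  obtain ⟨ms, hmsJ', hmin⟩ := Finset.exists_min_image J' (fun m => f (hiv m))
    ⟨m0, by rw [hJ'def, Finset.mem_filter]; exact ⟨hm0J, rfl⟩⟩
  rw [hJ'def, Finset.mem_filter] at hmsJ'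
  obtain ⟨hmsJ, hmslov⟩ := hmsJ'
  set us := lov ms with husdef
  set vs := hiv ms with hvsdef
  have hPms : P ms := hPJ ms hmsJ
  have fus : f us ≤ f a := lovle ms hPms
  have fvs : f b ≤ f vs := hivge ms hPms
  have edge_s : s(us, vs) ∈ c.edges := edgem ms
  have ussupp : us ∈ c.support := lovsupp ms
  have vssupp : vs ∈ c.support := hivsupp ms
  have umax : ∀ m ∈ J, f (lov m) ≤ f us := by
    intro m hm; rw [hmslov]; exact hmax m hm
  have vmin : ∀ m ∈ J, lov m = us → f vs ≤ f (hiv m) := by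
    intro m hm hl
    apply hmin
    rw [hJ'def, Finset.mem_filter]
    exact ⟨hm, by rw [hl, hmslov]⟩
  have nesting : ∀ m ∈ J, f vs ≤ f (hiv m) := by
    intro m hm
    by_cases hl : lov m = us
    · exact vmin m hm hl
    · have h1 : f (lov m) < f us := by
        have := umax m hm
        rcases Nat.lt_or_ge (f (lov m)) (f us) with h | h
        · exact h
        · exact absurd (hinj _ (lovsupp m) _ ussupp (by omega)) hl
      by_contra hcon
      have h2 := hivge m (hPJ m hm)
      exact hcross (lov m) (hiv m) us vs (edgem m) edge_s
        ⟨h1, by omega, by omega⟩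
  have notboth : ¬ (us = a ∧ vs = b) := by
    rintro ⟨h1, h2⟩
    rw [h1, h2] at edge_s
    exact hne edge_s
  have z0ex : f us < f a ∨ f b < f vs := by
    by_contra hcon
    push_neg at hcon
    obtain ⟨h1, h2⟩ := hcon
    exact notboth ⟨hinj _ ussupp _ ha (by omega), hinj _ vssupp _ hb (by omega)⟩
  set z0 : V := if f us < f a then a else b with hz0def
  have hz0supp : z0 ∈ c.support := by rw [hz0def]; split <;> assumption
  have hz0 : f us < f z0 ∧ f z0 < f vs := by
    rw [hz0def]; split
    · exact ⟨by omega, by omega⟩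
    · rcases z0ex with h | h
      · omega
      · exact ⟨by omega, h⟩
  -- W nonempty
  have hWex : ∃ w ∈ c.support, f w < f us ∨ f vs < f w := by
    by_contra hW
    push_neg at hW
    set m' := if m1 = ms then m2 else m1 with hm'def
    have hm'J : m' ∈ J := by rw [hm'def]; split <;> assumption
    have hm'ne : m' ≠ ms := by
      rw [hm'def]; split
      · next h => rw [← h]; exact hm12.symm
      · assumption
    have hlovm' : lov m' = us := by
      apply hinj _ (lovsupp m') _ ussupp
      have h1 := umax m' hm'J
      have h2 := (hW (lov m') (lovsupp m')).1
      omega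
    have hhivm' : hiv m' = vs := by
      apply hinj _ (hivsupp m') _ vssupp
      have h1 := vmin m' hm'J hlovm'
      have h2 := (hW (hiv m') (hivsupp m')).2
      omega
    have : s(Qv c m', Qv c (m'+1)) = s(Qv c ms, Qv c (ms+1)) := by
      rw [← pairset, ← pairset, hlovm', hhivm']
    have hmod := Qv_edge_index hc this
    have hm'Ico : ia ≤ m' ∧ m' < ia + c.length := by
      have := hm'J
      rw [hJdef, Finset.mem_filter, Finset.mem_Ico] at this
      exact this.1
    have hmsIco : ia ≤ ms ∧ ms < ia + c.length := by
      have := hmsJ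
      rw [hJdef, Finset.mem_filter, Finset.mem_Ico] at this
      exact this.1
    exact hm'ne (Qv_window_inj hc hm'Ico.1 hm'Ico.2 hmsIco.1 hmsIco.2 hmod)
  obtain ⟨w0, hw0supp, hw0⟩ := hWex
  -- pair identification
  have pairms : (us = Qv c ms ∧ vs = Qv c (ms+1)) ∨ (us = Qv c (ms+1) ∧ vs = Qv c ms) := by
    rw [husdef, hvsdef, hlovdef, hhivdef]
    dsimp only
    split
    · left; exact ⟨rfl, rfl⟩
    · right; exact ⟨rfl, rfl⟩
  -- window representative
  have window : ∀ (lo i : ℕ), i < c.length → ∃ j, lo ≤ j ∧ j < lo + c.length ∧ j % c.length = i := by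
    intro lo
    induction lo with
    | zero => intro i hi; exact ⟨i, by omega, by omega, Nat.mod_eq_of_lt hi⟩
    | succ n ih =>
      intro i hi
      obtain ⟨j, hj1, hj2, hj3⟩ := ih i hi
      rcases Nat.lt_or_ge j (n+1) with h | h
      · refine ⟨j + c.length, by omega, by omega, ?_⟩
        rw [Nat.add_mod_right, hj3]
      · exact ⟨j, h, by omega, hj3⟩
  have shift : ∀ x ∈ c.support, x ≠ Qv c ms → x ≠ Qv c (ms+1) →
      ∃ j, ms+2 ≤ j ∧ j ≤ ms + c.length - 1 ∧ Qv c j = x := by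
    intro x hx hx1 hx2
    obtain ⟨i, hi, hQi⟩ := Qv_exists hc hx
    obtain ⟨j, hj1, hj2, hj3⟩ := window (ms+2) i hi
    have hQj : Qv c j = x := by
      rw [← hQi]; apply Qv_congr; rw [hj3, Nat.mod_eq_of_lt hi]
    have hjne1 : j ≠ ms + c.length := by
      intro h; rw [h] at hQj
      rw [Qv_add_length] at hQj
      exact hx1 hQj.symm
    have hjne2 : j ≠ ms + c.length + 1 := by
      intro h; rw [h] at hQj
      rw [show ms + c.length + 1 = (ms + 1) + c.length by omega, Qv_add_length] at hQj
      exact hx2 hQj.symm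
    exact ⟨j, hj1, by omega, hQj⟩
  -- interior positions avoid us, vs
  have interior : ∀ j, ms+2 ≤ j → j ≤ ms + c.length - 1 → Qv c j ≠ us ∧ Qv c j ≠ vs := by
    intro j h1 h2
    have hne1 : Qv c j ≠ Qv c ms := by
      intro h
      have hmod := Qv_inj hc h
      have h5 : (ms + c.length) % c.length = ms % c.length := Nat.add_mod_right ms c.length
      have h6 : j % c.length = (ms + c.length) % c.length := by rw [hmod, h5]
      have := Qv_window_inj hc (lo := ms+1) (i := j) (j := ms + c.length) (by omega) (by omega)
        (by omega) (by omega) h6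
      omega
    have hne2 : Qv c j ≠ Qv c (ms+1) := by
      intro h
      have hmod := Qv_inj hc h
      have h5 : (ms + 1 + c.length) % c.length = (ms + 1) % c.length :=
        Nat.add_mod_right (ms+1) c.length
      have h6 : j % c.length = (ms + 1 + c.length) % c.length := by rw [hmod, h5]
      have := Qv_window_inj hc (lo := ms+2) (i := j) (j := ms + 1 + c.length) h1 (by omega)
        (by omega) (by omega) h6
      omega
    rcases pairms with ⟨hu, hv⟩ | ⟨hu, hv⟩
    · rw [hu, hv]; exact ⟨hne1, hne2⟩
    · rw [hu, hv]; exact ⟨hne2, hne1⟩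
  set Pz : ℕ → Prop := fun j => f us < f (Qv c j) ∧ f (Qv c j) < f vs with hPzdef
  have trich : ∀ j, ms+2 ≤ j → j ≤ ms + c.length - 1 → Pz j ∨ (f (Qv c j) < f us ∨ f vs < f (Qv c j)) := by
    intro j h1 h2
    obtain ⟨hne1, hne2⟩ := interior j h1 h2
    have hf1 : f (Qv c j) ≠ f us := fun h => hne1 (hinj _ (Qv_mem hc j) _ ussupp h)
    have hf2 : f (Qv c j) ≠ f vs := fun h => hne2 (hinj _ (Qv_mem hc j) _ vssupp h)
    rw [hPzdef]
    dsimp only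
    omega
  have step : ∀ j, ms+2 ≤ j → j+1 ≤ ms + c.length - 1 → (Pz j ↔ Pz (j+1)) := by
    intro j h1 h2
    have edgej : s(Qv c j, Qv c (j+1)) ∈ c.edges := Qv_edge hc j
    have edgej' : s(Qv c (j+1), Qv c j) ∈ c.edges := by rwa [Sym2.eq_swap]
    constructor
    · intro hpz
      rcases trich (j+1) (by omega) h2 with h | h
      · exact h
      · exfalso
        rcases h with h | h
        · exact hcross (Qv c (j+1)) (Qv c j) us vs edgej' edge_s
            ⟨h, hpz.1, hpz.2⟩
        · exact hcross us vs (Qv c j) (Qv c (j+1)) edge_s edgej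
            ⟨hpz.1, hpz.2, h⟩
    · intro hpz
      rcases trich j h1 (by omega) with h | h
      · exact h
      · exfalso
        rcases h with h | h
        · exact hcross (Qv c j) (Qv c (j+1)) us vs edgej edge_s
            ⟨h, hpz.1, hpz.2⟩
        · exact hcross us vs (Qv c (j+1)) (Qv c j) edge_s edgej'
            ⟨hpz.1, hpz.2, h⟩
  have const : ∀ n j, ms+2 ≤ j → j + n ≤ ms + c.length - 1 → (Pz j ↔ Pz (j+n)) := by
    intro n
    induction n with
    | zero => intro j _ _; rw [Nat.add_zero]
    | succ n ih =>
      intro j h1 h2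
      rw [show j + (n+1) = (j + n) + 1 by omega]
      exact (ih j h1 (by omega)).trans (step (j+n) (by omega) (by omega))
  -- get positions of z0 and w0
  have hz0ne : z0 ≠ Qv c ms ∧ z0 ≠ Qv c (ms+1) := by
    have h1 : z0 ≠ us := fun h => by rw [h] at hz0; omega
    have h2 : z0 ≠ vs := fun h => by rw [h] at hz0; omega
    rcases pairms with ⟨hu, hv⟩ | ⟨hu, hv⟩
    · rw [← hu, ← hv]; exact ⟨h1, h2⟩
    · rw [← hv, ← hu]; exact ⟨h2, h1⟩
  have hw0ne : w0 ≠ Qv c ms ∧ w0 ≠ Qv c (ms+1) := by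
    have h1 : w0 ≠ us := by
      intro h; rw [h] at hw0
      rcases hw0 with h' | h' <;> omega
    have h2 : w0 ≠ vs := by
      intro h; rw [h] at hw0
      rcases hw0 with h' | h' <;> omega
    rcases pairms with ⟨hu, hv⟩ | ⟨hu, hv⟩
    · rw [← hu, ← hv]; exact ⟨h1, h2⟩
    · rw [← hv, ← hu]; exact ⟨h2, h1⟩
  obtain ⟨jz, hjz1, hjz2, hjz3⟩ := shift z0 hz0supp hz0ne.1 hz0ne.2
  obtain ⟨jw, hjw1, hjw2, hjw3⟩ := shift w0 hw0supp hw0ne.1 hw0ne.2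
  have hPzz : Pz jz := by rw [hPzdef]; dsimp only; rw [hjz3]; exact hz0
  have hPzw : ¬ Pz jw := by
    rw [hPzdef]; dsimp only; rw [hjw3]
    rcases hw0 with h | h <;> omega
  rcases le_total jz jw with h | h
  · have := (const (jw - jz) jz hjz1 (by omega)).mp hPzz
    rw [show jz + (jw - jz) = jw by omega] at this
    exact hPzw this
  · have : Pz (jw + (jz - jw)) := by
      rw [show jw + (jz - jw) = jz by omega]; exact hPzz
    exact hPzw ((const (jz - jw) jw hjw1 (by omega)).mpr this)

lemma minmax_edge {v : V} {c : G.Walk v v} (hc : c.IsCycle) (f : V → ℕ)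
    (hinj : ∀ x ∈ c.support, ∀ y ∈ c.support, f x = f y → x = y)
    (hcross : ∀ p q x y : V, s(p,q) ∈ c.edges → s(x,y) ∈ c.edges →
      ¬ (f p < f x ∧ f x < f q ∧ f q < f y))
    {al om : V} (hal : al ∈ c.support) (hom : om ∈ c.support)
    (halmin : ∀ y ∈ c.support, f al ≤ f y) (hommax : ∀ y ∈ c.support, f y ≤ f om) :
    s(al, om) ∈ c.edges := by
  classical
  have hk : 3 ≤ c.length := hc.three_le_length
  have hne01 : Qv c 0 ≠ Qv c 1 := G.ne_of_adj (Qv_adj hc 0)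
  have hf01 : f (Qv c 0) ≠ f (Qv c 1) :=
    fun h => hne01 (hinj _ (Qv_mem hc 0) _ (Qv_mem hc 1) h)
  have halom : f al < f om := by
    have h1 := halmin _ (Qv_mem hc 0)
    have h2 := halmin _ (Qv_mem hc 1)
    have h3 := hommax _ (Qv_mem hc 0)
    have h4 := hommax _ (Qv_mem hc 1)
    omega
  have hneq : al ≠ om := fun h => by rw [h] at halom; omega
  set N := c.support.toFinset.sup f + 1 with hNdef
  have hNlt : ∀ y ∈ c.support, f y < N := by
    intro y hy
    have := Finset.le_sup (f := f) (List.mem_toFinset.mpr hy)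
    omega
  set f' : V → ℕ := fun y => if f y ≤ f al then f y + N else f y with hf'def
  have hf'al : f' al = f al + N := by rw [hf'def]; simp
  have hf'other : ∀ y ∈ c.support, y ≠ al → f' y = f y ∧ f al < f y := by
    intro y hy hyne
    have h1 : f al < f y := by
      have := halmin y hy
      rcases Nat.lt_or_ge (f al) (f y) with h | h
      · exact h
      · exact absurd (hinj _ hal _ hy (by omega)).symm hyne
    constructor
    · rw [hf'def]; simp only [if_neg (by omega : ¬ f y ≤ f al)]
    · exact h1
  have hinj' : ∀ x ∈ c.support, ∀ y ∈ c.support, f' x = f' y → x = y := by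
    intro x hx y hy hxy
    by_cases hxa : x = al <;> by_cases hya : y = al
    · rw [hxa, hya]
    · exfalso
      obtain ⟨hy1, _⟩ := hf'other y hy hya
      rw [hxa, hf'al, hy1] at hxy
      have := hNlt y hy
      omega
    · exfalso
      obtain ⟨hx1, _⟩ := hf'other x hx hxa
      rw [hya, hf'al, hx1] at hxy
      have := hNlt x hx
      omega
    · obtain ⟨hx1, _⟩ := hf'other x hx hxa
      obtain ⟨hy1, _⟩ := hf'other y hy hya
      rw [hx1, hy1] at hxy
      exact hinj _ hx _ hy hxy
  have hcross' : ∀ p q x y : V, s(p,q) ∈ c.edges → s(x,y) ∈ c.edges →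
      ¬ (f' p < f' x ∧ f' x < f' q ∧ f' q < f' y) := by
    rintro p q x y he1 he2 ⟨h1, h2, h3⟩
    have hp := c.fst_mem_support_of_mem_edges he1
    have hq := c.snd_mem_support_of_mem_edges he1
    have hx := c.fst_mem_support_of_mem_edges he2
    have hy := c.snd_mem_support_of_mem_edges he2
    by_cases hpa : p = al
    · by_cases hxa : x = al
      · rw [hpa, hxa] at h1; omega
      · obtain ⟨hx1, _⟩ := hf'other x hx hxa
        rw [hpa, hf'al, hx1] at h1
        have := hNlt x hx
        omega
    · by_cases hxa : x = al
      · by_cases hqa : q = al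
        · rw [hxa, hqa] at h2; omega
        · obtain ⟨hq1, _⟩ := hf'other q hq hqa
          rw [hxa, hf'al, hq1] at h2
          have := hNlt q hq
          omega
      · by_cases hqa : q = al
        · by_cases hya : y = al
          · rw [hqa, hya] at h3; omega
          · obtain ⟨hy1, _⟩ := hf'other y hy hya
            rw [hqa, hf'al, hy1] at h3
            have := hNlt y hy
            omega
        · by_cases hya : y = al
          · -- y = al : use swapped edges
            obtain ⟨hp1, hp2⟩ := hf'other p hp hpa
            obtain ⟨hx1, hx2⟩ := hf'other x hx hxa
            obtain ⟨hq1, hq2⟩ := hf'other q hq hqa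
            rw [hp1, hx1] at h1
            rw [hx1, hq1] at h2
            have he2' : s(y, x) ∈ c.edges := by rwa [Sym2.eq_swap]
            rw [← hya] at *
            exact hcross y x p q he2' he1 ⟨hp2, h1, h2⟩
          · obtain ⟨hp1, _⟩ := hf'other p hp hpa
            obtain ⟨hx1, _⟩ := hf'other x hx hxa
            obtain ⟨hq1, _⟩ := hf'other q hq hqa
            obtain ⟨hy1, _⟩ := hf'other y hy hya
            rw [hp1, hx1] at h1
            rw [hx1, hq1] at h2
            rw [hq1, hy1] at h3
            exact hcross p q x y he1 he2 ⟨h1, h2, h3⟩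
  have hconsec' : ∀ y ∈ c.support, f' y ≤ f' om ∨ f' al ≤ f' y := by
    intro y hy
    by_cases hya : y = al
    · right; rw [hya]
    · left
      obtain ⟨hy1, _⟩ := hf'other y hy hya
      obtain ⟨ho1, _⟩ := hf'other om hom hneq.symm
      rw [hy1, ho1]
      exact hommax y hy
  have hab' : f' om < f' al := by
    obtain ⟨ho1, _⟩ := hf'other om hom hneq.symm
    rw [ho1, hf'al]
    have := hNlt om hom
    omega
  have := consec_edge hc f' hinj' hcross' hom hal hab' hconsec'
  rwa [Sym2.eq_swap]

end ConsecEdge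

section Regions

lemma walk_stays {R : Set V} {g1 g2 : V}
    (hstep : ∀ p q, p ∈ R → G.Adj p q → q ∈ R ∨ q = g1 ∨ q = g2) :
    ∀ {p z : V} (w : G.Walk p z), p ∈ R → (∀ y ∈ w.support, y ≠ g1 ∧ y ≠ g2) → z ∈ R := by
  intro p z w
  induction w with
  | nil => exact fun h _ => h
  | @cons u m z' h q ih =>
    intro hp hgate
    have hmem : m ∈ (SimpleGraph.Walk.cons h q).support := by
      rw [SimpleGraph.Walk.support_cons]
      exact List.mem_cons_of_mem _ q.start_mem_support
    have hm : m ∈ R := by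
      rcases hstep u m hp h with h' | h' | h'
      · exact h'
      · exact absurd h' (hgate m hmem).1
      · exact absurd h' (hgate m hmem).2
    refine ih hm (fun y hy => hgate y ?_)
    rw [SimpleGraph.Walk.support_cons]
    exact List.mem_cons_of_mem _ hy

lemma gen_region (hconn : G.Connected) (hbip : G.Colorable 2) {v r : V} {c : G.Walk v v}
    (R : Set V) {g1 g2 s x : V}
    (hedge : s(g1, g2) ∈ c.edges)
    (hstep : ∀ p q, p ∈ R → G.Adj p q → q ∈ R ∨ q = g1 ∨ q = g2)
    (hRS : ∀ y ∈ R, y ∉ c.support)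
    (hx : x ∈ R) (hAdj : G.Adj x s) (hs : s ∈ c.support)
    (hdx : G.dist r x + 1 = G.dist r s) : r ∈ R := by
  classical
  by_contra hr
  have hadj12 : G.Adj g1 g2 := c.adj_of_mem_edges hedge
  have hg1s : g1 ∈ c.support := c.fst_mem_support_of_mem_edges hedge
  have hg2s : g2 ∈ c.support := c.snd_mem_support_of_mem_edges hedge
  have hxnS : x ∉ c.support := hRS x hx
  have hsg : s = g1 ∨ s = g2 := by
    rcases hstep x s hx hAdj with h | h | h
    · exact absurd hs (hRS s h)
    · exact Or.inl h
    · exact Or.inr h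
  have hsr : s ≠ r := by
    intro h
    rw [h] at hdx
    rw [SimpleGraph.dist_self] at hdx
    omega
  by_cases hrg : r = g1 ∨ r = g2
  · have hadrs : G.Adj r s := by
      rcases hrg with rfl | rfl <;> rcases hsg with rfl | rfl
      · exact absurd rfl hsr.symm
      · exact hadj12
      · exact hadj12.symm
      · exact absurd rfl hsr.symm
    have hds1 : G.dist r s ≤ 1 := by
      have := SimpleGraph.dist_le (SimpleGraph.Walk.cons hadrs SimpleGraph.Walk.nil)
      simpa using this
    have hdx0 : G.dist r x = 0 := by omega
    have hxr : x = r := ((hconn.dist_eq_zero_iff).mp hdx0).symm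
    rw [hxr] at hxnS
    rcases hrg with rfl | rfl
    · exact hxnS hg1s
    · exact hxnS hg2s
  · push_neg at hrg
    obtain ⟨p, hp⟩ := hconn.exists_walk_length_eq_dist x r
    have hgatein : ∃ g ∈ p.support, g = g1 ∨ g = g2 := by
      by_contra hno
      push_neg at hno
      exact hr (walk_stays hstep p hx (fun y hy => hno y hy))
    obtain ⟨g, hgsup, hg⟩ := hgatein
    have hgS : g ∈ c.support := by rcases hg with rfl | rfl <;> assumption
    have hsplit := SimpleGraph.Walk.take_spec p hgsup
    have hlen : (p.takeUntil g hgsup).length + (p.dropUntil g hgsup).length = p.length := by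
      rw [← SimpleGraph.Walk.length_append, hsplit]
    have htake1 : 1 ≤ (p.takeUntil g hgsup).length := by
      by_contra h0
      have h1 : (p.takeUntil g hgsup).length = 0 := by omega
      have := SimpleGraph.Walk.eq_of_length_eq_zero h1
      exact hxnS (this ▸ hgS)
    have hdg : G.dist r g + 1 ≤ G.dist r x := by
      have h1 : G.dist g r ≤ (p.dropUntil g hgsup).length := SimpleGraph.dist_le _
      have h2 : G.dist r g = G.dist g r := SimpleGraph.dist_comm ..
      have h3 : G.dist r x = p.length := by
        rw [hp]; exact SimpleGraph.dist_comm ..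
      omega
    have hpar := adj_dist_parity hconn hbip r hadj12
    rcases hg with rfl | rfl <;> rcases hsg with rfl | rfl <;> omega

lemma min_unique {v r : V} {c : G.Walk v v} (hc : c.IsCycle)
    (hconn : G.Connected) (hbip : G.Colorable 2)
    (f : V → ℕ) (hinj : Function.Injective f)
    (hcross : ∀ p q x y : V, G.Adj p q → G.Adj x y → ¬ (f p < f x ∧ f x < f q ∧ f q < f y))
    (hface : ∀ x y : V, x ∈ c.support → y ∈ c.support → G.Adj x y → s(x, y) ∈ c.edges)
    {s t : V} (hs : s ∈ c.support) (ht : t ∈ c.support)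
    (hsm : ∀ w, s(s, w) ∈ c.edges → G.dist r s < G.dist r w)
    (htm : ∀ w, s(t, w) ∈ c.edges → G.dist r t < G.dist r w) :
    s = t := by
  classical
  have hinjS : ∀ x ∈ c.support, ∀ y ∈ c.support, f x = f y → x = y :=
    fun x _ y _ h => hinj h
  have hcrossE : ∀ p q x y : V, s(p,q) ∈ c.edges → s(x,y) ∈ c.edges →
      ¬ (f p < f x ∧ f x < f q ∧ f q < f y) :=
    fun p q x y he1 he2 => hcross p q x y (c.adj_of_mem_edges he1) (c.adj_of_mem_edges he2)
  obtain ⟨al, halS', halmin'⟩ := Finset.exists_min_image c.support.toFinset f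
    ⟨v, List.mem_toFinset.mpr c.start_mem_support⟩
  obtain ⟨om, homS', hommax'⟩ := Finset.exists_max_image c.support.toFinset f
    ⟨v, List.mem_toFinset.mpr c.start_mem_support⟩
  have halS : al ∈ c.support := List.mem_toFinset.mp halS'
  have homS : om ∈ c.support := List.mem_toFinset.mp homS'
  have halmin : ∀ y ∈ c.support, f al ≤ f y :=
    fun y hy => halmin' y (List.mem_toFinset.mpr hy)
  have hommax : ∀ y ∈ c.support, f y ≤ f om :=
    fun y hy => hommax' y (List.mem_toFinset.mpr hy)
  have edge_alom : s(al, om) ∈ c.edges :=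
    minmax_edge hc f hinjS hcrossE halS homS halmin hommax
  have adj_alom : G.Adj al om := c.adj_of_mem_edges edge_alom
  -- key construction for each local min with positive distance
  have key : ∀ s' : V, s' ∈ c.support →
      (∀ w, s(s', w) ∈ c.edges → G.dist r s' < G.dist r w) → G.dist r s' ≠ 0 →
      ∃ (R : Set V) (g1 g2 : V), r ∈ R ∧ (∀ y ∈ R, y ∉ c.support) ∧
        (s' = g1 ∨ s' = g2) ∧ s(g1, g2) ∈ c.edges ∧
        ((g1 = al ∧ g2 = om ∧ R = {y : V | f y < f al ∨ f om < f y}) ∨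
          (g1 ∈ c.support ∧ g2 ∈ c.support ∧ f g1 < f g2 ∧
            (∀ y ∈ c.support, f y ≤ f g1 ∨ f g2 ≤ f y) ∧
            R = {y : V | f g1 < f y ∧ f y < f g2})) := by
    intro s' hs' hsm' hds0
    obtain ⟨x, hadjsx, hdx⟩ := exists_closer hconn hds0
    have hxnS : x ∉ c.support := by
      intro hxS
      have := hsm' x (hface s' x hs' hxS hadjsx)
      omega
    have hxal : x ≠ al := fun h => hxnS (h ▸ halS)
    have hxom : x ≠ om := fun h => hxnS (h ▸ homS)
    by_cases hbel : ∃ y ∈ c.support, f y < f x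
    · by_cases habv : ∃ y ∈ c.support, f x < f y
      · -- gap region
        obtain ⟨a, haB', hamax⟩ := Finset.exists_max_image
          (c.support.toFinset.filter (fun y => f y < f x)) f (by
            obtain ⟨y, hy1, hy2⟩ := hbel
            exact ⟨y, Finset.mem_filter.mpr ⟨List.mem_toFinset.mpr hy1, hy2⟩⟩)
        obtain ⟨b, hbB', hbmin⟩ := Finset.exists_min_image
          (c.support.toFinset.filter (fun y => f x < f y)) f (by
            obtain ⟨y, hy1, hy2⟩ := habv
            exact ⟨y, Finset.mem_filter.mpr ⟨List.mem_toFinset.mpr hy1, hy2⟩⟩)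
        rw [Finset.mem_filter] at haB' hbB'
        have haS : a ∈ c.support := List.mem_toFinset.mp haB'.1
        have hbS : b ∈ c.support := List.mem_toFinset.mp hbB'.1
        have hfa : f a < f x := haB'.2
        have hfb : f x < f b := hbB'.2
        have hconsec : ∀ y ∈ c.support, f y ≤ f a ∨ f b ≤ f y := by
          intro y hy
          rcases lt_trichotomy (f y) (f x) with h | h | h
          · exact Or.inl (hamax y (Finset.mem_filter.mpr ⟨List.mem_toFinset.mpr hy, h⟩))
          · exact absurd (hinj h) (fun heq => hxnS (heq ▸ hy))
          · exact Or.inr (hbmin y (Finset.mem_filter.mpr ⟨List.mem_toFinset.mpr hy, h⟩))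
        have hedge : s(a, b) ∈ c.edges :=
          consec_edge hc f hinjS hcrossE haS hbS (by omega) hconsec
        have hadjab : G.Adj a b := c.adj_of_mem_edges hedge
        set R : Set V := {y : V | f a < f y ∧ f y < f b} with hRdef
        have hxR : x ∈ R := ⟨hfa, hfb⟩
        have hstep : ∀ p q, p ∈ R → G.Adj p q → q ∈ R ∨ q = a ∨ q = b := by
          intro p q hp hadj
          rcases lt_trichotomy (f q) (f a) with h | h | h
          · exact absurd ⟨h, hp.1, hp.2⟩ (hcross q p a b hadj.symm hadjab).elim
          · exact Or.inr (Or.inl (hinj h))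
          · rcases lt_trichotomy (f q) (f b) with h2 | h2 | h2
            · exact Or.inl ⟨h, h2⟩
            · exact Or.inr (Or.inr (hinj h2))
            · exact absurd ⟨hp.1, hp.2, h2⟩ (hcross a b p q hadjab hadj).elim
        have hRS : ∀ y ∈ R, y ∉ c.support := by
          intro y hy hyS
          rcases hconsec y hyS with h | h
          · exact absurd hy.1 (by omega)
          · exact absurd hy.2 (by omega)
        have hrR : r ∈ R :=
          gen_region hconn hbip R hedge hstep hRS hxR hadjsx.symm hs' hdx
        have hsg : s' = a ∨ s' = b := by
          rcases hstep x s' hxR hadjsx.symm with h | h | h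
          · exact absurd hs' (hRS s' h)
          · exact Or.inl h
          · exact Or.inr h
        exact ⟨R, a, b, hrR, hRS, hsg, hedge,
          Or.inr ⟨haS, hbS, by omega, hconsec, rfl⟩⟩
      · -- x is above everything : outer region
        push_neg at habv
        have hxout : f om < f x := by
          have h1 := habv om homS
          have h2 : f x ≠ f om := fun h => hxom (hinj h)
          omega
        set R : Set V := {y : V | f y < f al ∨ f om < f y} with hRdef
        have hxR : x ∈ R := Or.inr hxout
        have hstep : ∀ p q, p ∈ R → G.Adj p q → q ∈ R ∨ q = al ∨ q = om := by
          intro p q hp hadj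
          by_cases hqa : q = al
          · exact Or.inr (Or.inl hqa)
          by_cases hqo : q = om
          · exact Or.inr (Or.inr hqo)
          by_cases hqR : q ∈ R
          · exact Or.inl hqR
          exfalso
          have hq1 : f al ≤ f q ∧ f q ≤ f om := by
            rw [hRdef] at hqR
            simp only [Set.mem_setOf_eq] at hqR
            omega
          have hq2 : f al < f q := by
            have : f q ≠ f al := fun h => hqa (hinj h)
            omega
          have hq3 : f q < f om := by
            have : f q ≠ f om := fun h => hqo (hinj h)
            omega
          rcases hp with h | h
          · exact (hcross p q al om hadj adj_alom) ⟨h, hq2, hq3⟩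
          · exact (hcross al om q p adj_alom hadj.symm) ⟨hq2, hq3, h⟩
        have hRS : ∀ y ∈ R, y ∉ c.support := by
          intro y hy hyS
          rcases hy with h | h
          · exact absurd (halmin y hyS) (by omega)
          · exact absurd (hommax y hyS) (by omega)
        have hrR : r ∈ R :=
          gen_region hconn hbip R edge_alom hstep hRS hxR hadjsx.symm hs' hdx
        have hsg : s' = al ∨ s' = om := by
          rcases hstep x s' hxR hadjsx.symm with h | h | h
          · exact absurd hs' (hRS s' h)
          · exact Or.inl h
          · exact Or.inr h
        exact ⟨R, al, om, hrR, hRS, hsg, edge_alom, Or.inl ⟨rfl, rfl, rfl⟩⟩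
    · -- x is below everything : outer region
      push_neg at hbel
      have hxout : f x < f al := by
        have h1 := hbel al halS
        have h2 : f x ≠ f al := fun h => hxal (hinj h)
        omega
      set R : Set V := {y : V | f y < f al ∨ f om < f y} with hRdef
      have hxR : x ∈ R := Or.inl hxout
      have hstep : ∀ p q, p ∈ R → G.Adj p q → q ∈ R ∨ q = al ∨ q = om := by
        intro p q hp hadj
        by_cases hqa : q = al
        · exact Or.inr (Or.inl hqa)
        by_cases hqo : q = om
        · exact Or.inr (Or.inr hqo)
        by_cases hqR : q ∈ R
        · exact Or.inl hqR
        exfalso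
        have hq1 : f al ≤ f q ∧ f q ≤ f om := by
          rw [hRdef] at hqR
          simp only [Set.mem_setOf_eq] at hqR
          omega
        have hq2 : f al < f q := by
          have : f q ≠ f al := fun h => hqa (hinj h)
          omega
        have hq3 : f q < f om := by
          have : f q ≠ f om := fun h => hqo (hinj h)
          omega
        rcases hp with h | h
        · exact (hcross p q al om hadj adj_alom) ⟨h, hq2, hq3⟩
        · exact (hcross al om q p adj_alom hadj.symm) ⟨hq2, hq3, h⟩
      have hRS : ∀ y ∈ R, y ∉ c.support := by
        intro y hy hyS
        rcases hy with h | h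
        · exact absurd (halmin y hyS) (by omega)
        · exact absurd (hommax y hyS) (by omega)
      have hrR : r ∈ R :=
        gen_region hconn hbip R edge_alom hstep hRS hxR hadjsx.symm hs' hdx
      have hsg : s' = al ∨ s' = om := by
        rcases hstep x s' hxR hadjsx.symm with h | h | h
        · exact absurd hs' (hRS s' h)
        · exact Or.inl h
        · exact Or.inr h
      exact ⟨R, al, om, hrR, hRS, hsg, edge_alom, Or.inl ⟨rfl, rfl, rfl⟩⟩
  -- now use key for s and t
  have pair_eq : ∀ (R1 R2 : Set V) (g1 g2 h1 h2 : V),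
      r ∈ R1 → r ∈ R2 →
      ((g1 = al ∧ g2 = om ∧ R1 = {y : V | f y < f al ∨ f om < f y}) ∨
        (g1 ∈ c.support ∧ g2 ∈ c.support ∧ f g1 < f g2 ∧
          (∀ y ∈ c.support, f y ≤ f g1 ∨ f g2 ≤ f y) ∧
          R1 = {y : V | f g1 < f y ∧ f y < f g2})) →
      ((h1 = al ∧ h2 = om ∧ R2 = {y : V | f y < f al ∨ f om < f y}) ∨
        (h1 ∈ c.support ∧ h2 ∈ c.support ∧ f h1 < f h2 ∧
          (∀ y ∈ c.support, f y ≤ f h1 ∨ f h2 ≤ f y) ∧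
          R2 = {y : V | f h1 < f y ∧ f y < f h2})) →
      g1 = h1 ∧ g2 = h2 := by
    intro R1 R2 g1 g2 h1 h2 hr1 hr2 hc1 hc2
    rcases hc1 with ⟨e1, e2, hR1⟩ | ⟨hg1S, hg2S, hg12, hgcon, hR1⟩ <;>
      rcases hc2 with ⟨e1', e2', hR2⟩ | ⟨hh1S, hh2S, hh12, hhcon, hR2⟩
    · rw [e1, e2, e1', e2']; exact ⟨rfl, rfl⟩
    · exfalso
      rw [hR1] at hr1
      rw [hR2] at hr2
      simp only [Set.mem_setOf_eq] at hr1 hr2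
      have q1 := halmin h1 hh1S
      have q2 := hommax h2 hh2S
      omega
    · exfalso
      rw [hR1] at hr1
      rw [hR2] at hr2
      simp only [Set.mem_setOf_eq] at hr1 hr2
      have q1 := halmin g1 hg1S
      have q2 := hommax g2 hg2S
      omega
    · rw [hR1] at hr1
      rw [hR2] at hr2
      simp only [Set.mem_setOf_eq] at hr1 hr2
      have e1 : g1 = h1 := by
        apply hinjS _ hg1S _ hh1S
        rcases hgcon h1 hh1S with q | q <;> rcases hhcon g1 hg1S with q' | q' <;> omega
      have e2 : g2 = h2 := by
        apply hinjS _ hg2S _ hh2S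
        rcases hgcon h2 hh2S with q | q <;> rcases hhcon g2 hg2S with q' | q' <;> omega
      exact ⟨e1, e2⟩
  by_cases hds : G.dist r s = 0
  · have hsr : r = s := (hconn.dist_eq_zero_iff).mp hds
    by_cases hdt : G.dist r t = 0
    · have htr : r = t := (hconn.dist_eq_zero_iff).mp hdt
      rw [← hsr, ← htr]
    · exfalso
      obtain ⟨R2, g1, g2, hrR2, hRS2, _, _, _⟩ := key t ht htm hdt
      exact hRS2 r hrR2 (hsr ▸ hs)
  · by_cases hdt : G.dist r t = 0
    · exfalso
      have htr : r = t := (hconn.dist_eq_zero_iff).mp hdt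
      obtain ⟨R1, g1, g2, hrR1, hRS1, _, _, _⟩ := key s hs hsm hds
      exact hRS1 r hrR1 (htr ▸ ht)
    · obtain ⟨R1, g1, g2, hrR1, hRS1, hsg, hedge1, hclass1⟩ := key s hs hsm hds
      obtain ⟨R2, h1, h2, hrR2, hRS2, htg, hedge2, hclass2⟩ := key t ht htm hdt
      obtain ⟨eg1, eg2⟩ := pair_eq R1 R2 g1 g2 h1 h2 hrR1 hrR2 hclass1 hclass2
      rw [← eg1, ← eg2] at htg
      by_contra hst
      have hedgest : s(s, t) ∈ c.edges := by
        rcases hsg with rfl | rfl <;> rcases htg with rfl | rfl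
        · exact absurd rfl hst
        · exact hedge1
        · rwa [Sym2.eq_swap]
        · exact absurd rfl hst
      have h1' := hsm t hedgest
      have h2' := htm s (by rwa [Sym2.eq_swap] at hedgest)
      omega

lemma max_unique {v r : V} {c : G.Walk v v} (hc : c.IsCycle)
    (hconn : G.Connected) (hbip : G.Colorable 2)
    (f : V → ℕ) (hinj : Function.Injective f)
    (hcross : ∀ p q x y : V, G.Adj p q → G.Adj x y → ¬ (f p < f x ∧ f x < f q ∧ f q < f y))
    (hface : ∀ x y : V, x ∈ c.support → y ∈ c.support → G.Adj x y → s(x, y) ∈ c.edges)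
    {z1 z2 : V} (hz1 : z1 ∈ c.support) (hz2 : z2 ∈ c.support)
    (hmax1 : ∀ w, s(z1, w) ∈ c.edges → G.dist r w < G.dist r z1)
    (hmax2 : ∀ w, s(z2, w) ∈ c.edges → G.dist r w < G.dist r z2) :
    z1 = z2 := by
  classical
  have hk : 3 ≤ c.length := hc.three_le_length
  have arcmin : ∀ p q : ℕ, p + 2 ≤ q →
      (∀ w, s(Qv c p, w) ∈ c.edges → G.dist r w < G.dist r (Qv c p)) →
      (∀ w, s(Qv c q, w) ∈ c.edges → G.dist r w < G.dist r (Qv c q)) →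
      ∃ j, p < j ∧ j < q ∧
        (∀ w, s(Qv c j, w) ∈ c.edges → G.dist r (Qv c j) < G.dist r w) := by
    intro p q hpq hp hq
    obtain ⟨j, hjI, hjmin⟩ := Finset.exists_min_image (Finset.Icc p q)
      (fun i => G.dist r (Qv c i)) ⟨p, by rw [Finset.mem_Icc]; omega⟩
    rw [Finset.mem_Icc] at hjI
    have hjp : j ≠ p := by
      intro h
      have h1 := hp _ (Qv_edge hc p)
      have h2 := hjmin (p+1) (by rw [Finset.mem_Icc]; omega)
      rw [h] at h2; omega
    have hjq : j ≠ q := by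
      intro h
      have e1 := Qv_edge hc (q-1)
      rw [show q - 1 + 1 = q by omega] at e1
      have e1' : s(Qv c q, Qv c (q-1)) ∈ c.edges := by rwa [Sym2.eq_swap]
      have h1 := hq _ e1'
      have h2 := hjmin (q-1) (by rw [Finset.mem_Icc]; omega)
      rw [h] at h2; omega
    refine ⟨j, by omega, by omega, ?_⟩
    intro w hw
    have hadj : G.Adj (Qv c j) w := c.adj_of_mem_edges hw
    have hpar := adj_dist_parity hconn hbip r hadj
    rcases Qv_neighbor hc hw with rfl | rfl
    · have := hjmin (j+1) (by rw [Finset.mem_Icc]; omega)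
      omega
    · have hQeq : Qv c (j + (c.length - 1)) = Qv c (j-1) := by
        apply Qv_congr
        rw [show j + (c.length - 1) = (j-1) + c.length by omega, Nat.add_mod_right]
      rw [hQeq] at hpar ⊢
      have := hjmin (j-1) (by rw [Finset.mem_Icc]; omega)
      omega
  have core : ∀ p q : ℕ, p < q → q < p + c.length →
      (∀ w, s(Qv c p, w) ∈ c.edges → G.dist r w < G.dist r (Qv c p)) →
      (∀ w, s(Qv c q, w) ∈ c.edges → G.dist r w < G.dist r (Qv c q)) → False := by
    intro p q hpq hqlt hp hq
    by_cases h1 : q = p + 1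
    · subst h1
      have e1 := Qv_edge hc p
      have h2 := hp _ e1
      have h3 := hq _ (by rwa [Sym2.eq_swap] at e1)
      omega
    by_cases h2 : q = p + c.length - 1
    · have e1 := Qv_edge hc q
      have hq1 : Qv c (q + 1) = Qv c p := by
        rw [show q + 1 = p + c.length by omega, Qv_add_length]
      rw [hq1] at e1
      have h3 := hq _ e1
      have h4 := hp _ (by rwa [Sym2.eq_swap] at e1)
      omega
    have hple : ∀ w, s(Qv c (p + c.length), w) ∈ c.edges →
        G.dist r w < G.dist r (Qv c (p + c.length)) := by
      rw [Qv_add_length]; exact hp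
    obtain ⟨j1, hj1a, hj1b, hj1min⟩ := arcmin p q (by omega) hp hq
    obtain ⟨j2, hj2a, hj2b, hj2min⟩ := arcmin q (p + c.length) (by omega) hq hple
    have hQeq : Qv c j1 = Qv c j2 :=
      min_unique hc hconn hbip f hinj hcross hface (Qv_mem hc j1) (Qv_mem hc j2) hj1min hj2min
    have hmod := Qv_inj hc hQeq
    have := Qv_window_inj hc (lo := j1) (i := j1) (j := j2) le_rfl (by omega) (by omega)
      (by omega) hmod
    omega
  by_contra hne
  obtain ⟨i1, hi1, hQ1⟩ := Qv_exists hc hz1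
  obtain ⟨i2, hi2, hQ2⟩ := Qv_exists hc hz2
  have hm1' : ∀ w, s(Qv c i1, w) ∈ c.edges → G.dist r w < G.dist r (Qv c i1) := by
    rw [hQ1]; exact hmax1
  have hm2' : ∀ w, s(Qv c i2, w) ∈ c.edges → G.dist r w < G.dist r (Qv c i2) := by
    rw [hQ2]; exact hmax2
  have hi12 : i1 ≠ i2 := fun h => hne (by rw [← hQ1, ← hQ2, h])
  rcases Nat.lt_or_ge i1 i2 with h | h
  · exact core i1 i2 h (by omega) hm1' hm2'
  · exact core i2 i1 (by omega) (by omega) hm2' hm1'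

end Regions


end Stmt17Aux

/-- For a connected bipartite outerplanar graph `G` with root `r`, every bounded
face cycle (equivalently, chordless cycle) `c` contains a unique vertex nearest
to `r`, and distances from `r` increase monotonically along both paths of `c`
from this nearest vertex to a unique farthest vertex. -/
theorem stmt17 (G : SimpleGraph V) (hout : IsOuterplanar G) (hbip : G.Colorable 2)
    (hconn : G.Connected) (r : V) (v : V) (c : G.Walk v v) (hc : c.IsCycle)
    (hface : ∀ x y : V, x ∈ c.support → y ∈ c.support → G.Adj x y →
      s(x, y) ∈ c.edges) :
    ∃ u ∈ c.support, ∃ z ∈ c.support,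
      (∀ w ∈ c.support, w ≠ u → G.dist r u < G.dist r w) ∧
      (∀ w ∈ c.support, w ≠ z → G.dist r w < G.dist r z) ∧
      (∀ w ∈ c.support, w ≠ u →
        ∃ x : V, s(w, x) ∈ c.edges ∧ G.dist r x < G.dist r w) ∧
      (∀ w ∈ c.support, w ≠ z →
        ∃ x : V, s(w, x) ∈ c.edges ∧ G.dist r w < G.dist r x) := by
  classical
  obtain ⟨f, hinjf, hcrossf⟩ := hout
  have hcross : ∀ p q x y : V, G.Adj p q → G.Adj x y →
      ¬ (f p < f x ∧ f x < f q ∧ f q < f y) := by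
    intro p q x y h1 h2 hpat
    exact hcrossf p q x y h1 h2 ⟨hpat.1, hpat.2.1, hpat.2.2⟩
  obtain ⟨u0, hu0S', hu0min⟩ := Finset.exists_min_image c.support.toFinset
    (fun w => G.dist r w) ⟨v, List.mem_toFinset.mpr c.start_mem_support⟩
  obtain ⟨z0, hz0S', hz0max⟩ := Finset.exists_max_image c.support.toFinset
    (fun w => G.dist r w) ⟨v, List.mem_toFinset.mpr c.start_mem_support⟩
  have hu0S : u0 ∈ c.support := List.mem_toFinset.mp hu0S'
  have hz0S : z0 ∈ c.support := List.mem_toFinset.mp hz0S'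
  have hu0isMin : ∀ w, s(u0, w) ∈ c.edges → G.dist r u0 < G.dist r w := by
    intro w hw
    have hwS : w ∈ c.support := c.snd_mem_support_of_mem_edges hw
    have h1 := hu0min w (List.mem_toFinset.mpr hwS)
    have hpar := Stmt17Aux.adj_dist_parity hconn hbip r (c.adj_of_mem_edges hw)
    omega
  have hz0isMax : ∀ w, s(z0, w) ∈ c.edges → G.dist r w < G.dist r z0 := by
    intro w hw
    have hwS : w ∈ c.support := c.snd_mem_support_of_mem_edges hw
    have h1 := hz0max w (List.mem_toFinset.mpr hwS)
    have hpar := Stmt17Aux.adj_dist_parity hconn hbip r (c.adj_of_mem_edges hw)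
    omega
  refine ⟨u0, hu0S, z0, hz0S, ?_, ?_, ?_, ?_⟩
  · intro w hwS hwne
    have h1 := hu0min w (List.mem_toFinset.mpr hwS)
    rcases Nat.lt_or_ge (G.dist r u0) (G.dist r w) with h | h
    · exact h
    · exfalso
      have heq : G.dist r w = G.dist r u0 := by omega
      have hwmin : ∀ w', s(w, w') ∈ c.edges → G.dist r w < G.dist r w' := by
        intro w' hw'
        have hw'S : w' ∈ c.support := c.snd_mem_support_of_mem_edges hw'
        have h2 := hu0min w' (List.mem_toFinset.mpr hw'S)
        have hpar := Stmt17Aux.adj_dist_parity hconn hbip r (c.adj_of_mem_edges hw')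
        omega
      exact hwne (Stmt17Aux.min_unique hc hconn hbip f hinjf hcross hface
        hwS hu0S hwmin hu0isMin)
  · intro w hwS hwne
    have h1 := hz0max w (List.mem_toFinset.mpr hwS)
    rcases Nat.lt_or_ge (G.dist r w) (G.dist r z0) with h | h
    · exact h
    · exfalso
      have heq : G.dist r w = G.dist r z0 := by omega
      have hwmax : ∀ w', s(w, w') ∈ c.edges → G.dist r w' < G.dist r w := by
        intro w' hw'
        have hw'S : w' ∈ c.support := c.snd_mem_support_of_mem_edges hw'
        have h2 := hz0max w' (List.mem_toFinset.mpr hw'S)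
        have hpar := Stmt17Aux.adj_dist_parity hconn hbip r (c.adj_of_mem_edges hw')
        omega
      exact hwne (Stmt17Aux.max_unique hc hconn hbip f hinjf hcross hface
        hwS hz0S hwmax hz0isMax)
  · intro w hwS hwne
    by_contra hno
    push_neg at hno
    have hwmin : ∀ w', s(w, w') ∈ c.edges → G.dist r w < G.dist r w' := by
      intro w' hw'
      have h1 := hno w' hw'
      have hpar := Stmt17Aux.adj_dist_parity hconn hbip r (c.adj_of_mem_edges hw')
      omega
    exact hwne (Stmt17Aux.min_unique hc hconn hbip f hinjf hcross hface
      hwS hu0S hwmin hu0isMin)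
  · intro w hwS hwne
    by_contra hno
    push_neg at hno
    have hwmax : ∀ w', s(w, w') ∈ c.edges → G.dist r w' < G.dist r w := by
      intro w' hw'
      have h1 := hno w' hw'
      have hpar := Stmt17Aux.adj_dist_parity hconn hbip r (c.adj_of_mem_edges hw')
      omega
    exact hwne (Stmt17Aux.max_unique hc hconn hbip f hinjf hcross hface
      hwS hz0S hwmax hz0isMax)
end
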